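/- arXiv:2408.13874 — 5 statements merged into one kernel-verified Lean document; each statement's English description precedes it below -/
import Mathlib

section
/- Let n ≥ 1 and 0 ≤ k ≤ n. In the lattice of set partitions of {1,…,n} ordered by refinement (σ ≤ τ iff every block of σ is contained in a block of τ), with minimum element 0̂ the partition into singletons, the sum of the Möbius function values μ(0̂, σ) over all set partitions σ of {1,…,n} with exactly n−k blocks equals (−1)^k times the number of permutations of {1,…,n} whose disjoint cycle decomposition has exactly n−k cycles (fixed points counted as cycles). -/
open Finset Equiv Equiv.Perm

instance {n : ℕ} : Finite (Setoid (Fin n)) :=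
  Finite.of_injective (fun s : Setoid (Fin n) => (⇑s : Fin n → Fin n → Prop))
    (fun s t h => by cases s; cases t; congr)

noncomputable instance {n : ℕ} : Fintype (Setoid (Fin n)) := Fintype.ofFinite _

theorem quotCard {n : ℕ} (π : Perm (Fin n)) :
    Nat.card (Quotient (SameCycle.setoid π)) =
      Multiset.card π.cycleType + (n - π.support.card) := by
  classical
  have hf : ∀ x : Fin n, x ∈ π.support → π.cycleOf x ∈ π.cycleFactorsFinset :=
    fun x hx => cycleOf_mem_cycleFactorsFinset_iff.2 hx
  let f : Fin n → (π.cycleFactorsFinset ⊕ {x : Fin n // x ∉ π.support}) := fun x =>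
    if h : x ∈ π.support then .inl ⟨π.cycleOf x, hf x h⟩ else .inr ⟨x, h⟩
  have key : ∀ x y : Fin n, f x = f y ↔ π.SameCycle x y := by
    intro x y
    by_cases hx : x ∈ π.support <;> by_cases hy : y ∈ π.support <;>
      simp only [f, dif_pos, dif_neg, hx, hy]
    · constructor
      · intro h
        have h2 : π.cycleOf x = π.cycleOf y := by simpa using h
        have : y ∈ (π.cycleOf x).support := by
          rw [h2, mem_support_cycleOf_iff]; exact ⟨SameCycle.refl _ _, hy⟩
        exact (mem_support_cycleOf_iff.1 this).1
      · intro h; simp [h.cycleOf_eq]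
    · constructor
      · rintro ⟨⟩
      · intro h; exact absurd ((h.mem_support_iff).1 hx) hy
    · constructor
      · rintro ⟨⟩
      · intro h; exact absurd ((h.mem_support_iff).2 hy) hx
    · constructor
      · intro h
        have : x = y := by simpa using h
        exact this ▸ SameCycle.refl _ _
      · intro ⟨i, hi⟩
        have := zpow_apply_eq_self_of_apply_eq_self (by simpa using hx) i
        simp [← hi, this]
  let g : Quotient (SameCycle.setoid π) → (π.cycleFactorsFinset ⊕ {x : Fin n // x ∉ π.support}) :=
    Quotient.lift f (fun x y h => (key x y).2 h)
  have hbij : Function.Bijective g := by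
    constructor
    · rintro ⟨x⟩ ⟨y⟩ h
      exact Quotient.sound ((key x y).1 h)
    · rintro (⟨c, hc⟩ | ⟨x, hx⟩)
      · have hcyc : c.IsCycle := (mem_cycleFactorsFinset_iff.1 hc).1
        obtain ⟨x, hx⟩ := hcyc.nonempty_support
        have hxs : x ∈ π.support := by
          rw [mem_support, ← (mem_cycleFactorsFinset_iff.1 hc).2 x hx]
          exact mem_support.1 hx
        refine ⟨Quotient.mk _ x, ?_⟩
        simp only [g, Quotient.lift_mk, f, dif_pos hxs]
        congr 1
        exact Subtype.ext (cycle_is_cycleOf hx hc).symm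
      · exact ⟨Quotient.mk _ x, by simp only [g, Quotient.lift_mk, f, dif_neg hx]⟩
  have := Nat.card_eq_of_bijective g hbij
  rw [this, Nat.card_sum]
  congr 1
  · rw [Nat.card_eq_fintype_card, Fintype.card_coe]
    simp [cycleType]
  · rw [Nat.card_eq_fintype_card]
    have : Fintype.card {x : Fin n // x ∉ π.support} = n - π.support.card := by
      rw [Fintype.card_subtype_compl, Fintype.card_fin]
      congr 1
      exact (Fintype.card_coe _).symm ▸ (Fintype.card_coe π.support)
    exact this

section
variable {n : ℕ}

theorem signEq (π : Perm (Fin n)) (hq : Nat.card (Quotient (SameCycle.setoid π)) =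
      Multiset.card π.cycleType + (n - π.support.card)) :
    (Equiv.Perm.sign π : ℤ) = (-1) ^ (n - Nat.card (Quotient (SameCycle.setoid π))) := by
  classical
  have hs : π.support.card ≤ n := by
    simpa using Finset.card_le_card (Finset.subset_univ π.support)
  have hc2 : 2 * Multiset.card π.cycleType ≤ π.support.card := by
    rw [← Equiv.Perm.sum_cycleType]
    calc 2 * Multiset.card π.cycleType = Multiset.card π.cycleType * 2 := by ring
    _ ≤ π.cycleType.sum := Multiset.card_nsmul_le_sum (fun x hx => two_le_of_mem_cycleType hx)
  have hc : Multiset.card π.cycleType ≤ π.support.card := le_trans (by omega) hc2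
  have h1 : n - Nat.card (Quotient (SameCycle.setoid π)) =
      π.support.card - Multiset.card π.cycleType := by omega
  rw [h1]
  have := Equiv.Perm.sign_of_cycleType π
  rw [Equiv.Perm.sum_cycleType] at this
  have h2 : (Equiv.Perm.sign π : ℤ) =
      (-1) ^ (π.support.card + Multiset.card π.cycleType) := by
    rw [this]; push_cast; ring
  rw [h2]
  have h3 : π.support.card + Multiset.card π.cycleType =
      (π.support.card - Multiset.card π.cycleType) + 2 * Multiset.card π.cycleType := by omega
  rw [h3, pow_add]
  simp [pow_mul]

theorem setoidLeIff (π : Perm (Fin n)) (σ : Setoid (Fin n)) :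
    SameCycle.setoid π ≤ σ ↔ ∀ x, σ x (π x) := by
  constructor
  · intro h x
    exact Setoid.le_def.1 h ⟨1, by simp⟩
  · intro h
    rw [Setoid.le_def]
    have aux : ∀ x, σ x (π⁻¹ x) := fun x => σ.symm (by simpa using h (π⁻¹ x))
    have key : ∀ (i : ℤ) (x : Fin n), σ x ((π ^ i) x) := by
      intro i
      induction i using Int.induction_on with
      | zero => intro x; simpa using σ.refl x
      | succ i ih =>
        intro x
        have : (π ^ ((i : ℤ) + 1)) x = (π ^ (i : ℤ)) (π x) := by
          rw [zpow_add_one, Equiv.Perm.mul_apply]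
        rw [this]
        exact σ.trans (h x) (ih (π x))
      | pred i ih =>
        intro x
        have : (π ^ (-(i : ℤ) - 1)) x = (π ^ (-(i : ℤ))) (π⁻¹ x) := by
          rw [zpow_sub_one, Equiv.Perm.mul_apply]
        rw [this]
        exact σ.trans (aux x) (ih (π⁻¹ x))
    rintro x y ⟨i, hi⟩
    exact hi ▸ key i x

theorem cSetoidEqBot (π : Perm (Fin n)) : SameCycle.setoid π = ⊥ ↔ π = 1 := by
  constructor
  · intro h
    refine Equiv.ext fun x => ?_
    by_contra hx
    have hsc : π.SameCycle x (π x) := ⟨1, by simp⟩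
    have : (⊥ : Setoid (Fin n)) x (π x) := h ▸ hsc
    rw [Setoid.bot_def] at this
    exact hx this.symm
  · rintro rfl
    ext x y
    simp [SameCycle.setoid, Setoid.bot_def]
    exact Equiv.Perm.sameCycle_one

end

section
variable {n : ℕ}

open scoped Classical in
/-- The fiber of permutations whose cycle setoid is `σ`. -/
noncomputable def cFiber (σ : Setoid (Fin n)) : Finset (Perm (Fin n)) :=
  univ.filter (fun π => SameCycle.setoid π = σ)

noncomputable def Fsum (σ : Setoid (Fin n)) : ℤ :=
  ∑ π ∈ cFiber σ, (Equiv.Perm.sign π : ℤ)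

open scoped Classical in
theorem sum_le_zero (σ : Setoid (Fin n)) (hσ : σ ≠ ⊥) :
    ∑ π ∈ univ.filter (fun π : Perm (Fin n) => SameCycle.setoid π ≤ σ),
      (Equiv.Perm.sign π : ℤ) = 0 := by
  -- find x ≠ y related by σ
  obtain ⟨x, y, hxy, hne⟩ : ∃ x y : Fin n, σ x y ∧ x ≠ y := by
    by_contra h
    push_neg at h
    apply hσ
    apply le_antisymm _ bot_le
    rw [Setoid.le_def]
    intro a b hab
    rw [Setoid.bot_def]
    by_contra hne
    exact hne (h a b hab)
  set t : Perm (Fin n) := Equiv.swap x y with ht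
  have htmem : ∀ z, σ z (t z) := by
    intro z
    rcases eq_or_ne z x with rfl | hzx
    · rw [ht, Equiv.swap_apply_left]; exact hxy
    rcases eq_or_ne z y with rfl | hzy
    · rw [ht, Equiv.swap_apply_right]; exact σ.symm hxy
    · rw [ht, Equiv.swap_apply_of_ne_of_ne hzx hzy]
  set S := univ.filter (fun π : Perm (Fin n) => SameCycle.setoid π ≤ σ) with hS
  have hmemS : ∀ π : Perm (Fin n), π ∈ S ↔ ∀ z, σ z (π z) := by
    intro π
    simp only [hS, mem_filter, mem_univ, true_and]
    exact setoidLeIff π σ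
  have hclosed : ∀ π ∈ S, t * π ∈ S := by
    intro π hπ
    rw [hmemS] at hπ ⊢
    intro z
    exact σ.trans (hπ z) (htmem (π z))
  have hsum : ∑ π ∈ S, (Equiv.Perm.sign π : ℤ)
      = ∑ π ∈ S, (Equiv.Perm.sign (t * π) : ℤ) := by
    apply Finset.sum_nbij' (fun π => t * π) (fun π => t * π)
    · exact hclosed
    · exact hclosed
    · intro π _; rw [← mul_assoc, ht, Equiv.swap_mul_self, one_mul]
    · intro π _; rw [← mul_assoc, ht, Equiv.swap_mul_self, one_mul]
    · intro π _
      rw [← mul_assoc, ht, Equiv.swap_mul_self, one_mul]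
  have hsign : ∀ π : Perm (Fin n), (Equiv.Perm.sign (t * π) : ℤ) = -(Equiv.Perm.sign π : ℤ) := by
    intro π
    rw [map_mul, ht, Equiv.Perm.sign_swap hne]
    push_cast
    ring
  have : ∑ π ∈ S, (Equiv.Perm.sign π : ℤ) = -∑ π ∈ S, (Equiv.Perm.sign π : ℤ) := by
    conv_lhs => rw [hsum]
    rw [← Finset.sum_neg_distrib]
    exact Finset.sum_congr rfl (fun π _ => hsign π)
  omega

open scoped Classical in
theorem mu_eq_Fsum (μ : Setoid (Fin n) → ℤ)
    (hbot : μ ⊥ = 1)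
    (hrec : ∀ σ : Setoid (Fin n), σ ≠ ⊥ →
      μ σ = -∑ᶠ τ ∈ {τ : Setoid (Fin n) | τ < σ}, μ τ) :
    ∀ σ : Setoid (Fin n), μ σ = Fsum σ := by
  intro σ
  induction σ using WellFoundedLT.induction with
  | ind σ ih =>
    rcases eq_or_ne σ ⊥ with rfl | hσ
    · rw [hbot]
      have : cFiber (⊥ : Setoid (Fin n)) = {1} := by
        ext π
        simp [cFiber, cSetoidEqBot]
      rw [Fsum, this]
      simp
    · have hfin : ∑ᶠ τ ∈ {τ : Setoid (Fin n) | τ < σ}, μ τ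
          = ∑ τ ∈ univ.filter (fun τ => τ < σ), μ τ := by
        rw [← finsum_mem_coe_finset]
        congr 1
        ext τ; simp
      rw [hrec σ hσ, hfin,
        Finset.sum_congr rfl (fun τ hτ => ih τ (by simpa using hτ))]
      -- now: -∑_{τ<σ} Fsum τ = Fsum σ, from ∑_{τ≤σ} Fsum τ = 0
      have hkey : ∑ τ ∈ univ.filter (fun τ => τ ≤ σ), Fsum τ = 0 := by
        rw [← sum_le_zero σ hσ]
        have hfw := Finset.sum_fiberwise_of_maps_to
          (s := univ.filter (fun π : Perm (Fin n) => SameCycle.setoid π ≤ σ))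
          (t := univ.filter (fun τ : Setoid (Fin n) => τ ≤ σ))
          (g := fun π => SameCycle.setoid π)
          (fun π hπ => mem_filter.2 ⟨mem_univ _, by simpa using (mem_filter.1 hπ).2⟩)
          (fun π => (Equiv.Perm.sign π : ℤ))
        rw [← hfw]
        apply Finset.sum_congr rfl
        intro τ hτ
        have hτσ : τ ≤ σ := by simpa using hτ
        rw [Fsum]
        apply Finset.sum_congr _ (fun _ _ => rfl)
        ext π
        simp only [cFiber, mem_filter, mem_univ, true_and]
        constructor
        · intro h
          exact ⟨by rw [h]; exact hτσ, h⟩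
        · rintro ⟨_, h⟩
          exact h
      have hsplit : (univ.filter (fun τ => τ ≤ σ) : Finset (Setoid (Fin n)))
          = insert σ (univ.filter (fun τ => τ < σ)) := by
        ext τ
        simp only [mem_filter, mem_univ, true_and, mem_insert]
        rw [le_iff_lt_or_eq]
        tauto
      rw [hsplit, Finset.sum_insert (by simp)] at hkey
      linarith
end

open scoped Classical in
/-- Let `n ≥ 1` and `0 ≤ k ≤ n`.  In the lattice of set partitions of
`{1,…,n}` (modelled as setoids on `Fin n`, ordered by refinement, with minimum element
`⊥` the partition into singletons), suppose `μ` is the Möbius function, i.e. `μ ⊥ = 1`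
and `μ σ = −Σ_{τ < σ} μ τ` for `σ ≠ ⊥`.  Then the sum of `μ σ` over all partitions `σ`
with exactly `n − k` blocks equals `(−1)^k` times the number of permutations of
`{1,…,n}` having exactly `n − k` disjoint cycles (fixed points counted as cycles). -/
theorem stmt0 (n k : ℕ) (hn : 1 ≤ n) (hk : k ≤ n)
    (μ : Setoid (Fin n) → ℤ)
    (hbot : μ ⊥ = 1)
    (hrec : ∀ σ : Setoid (Fin n), σ ≠ ⊥ →
      μ σ = -∑ᶠ τ ∈ {τ : Setoid (Fin n) | τ < σ}, μ τ) :
    (∑ᶠ σ ∈ {σ : Setoid (Fin n) | Nat.card (Quotient σ) = n - k}, μ σ)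
      = (-1) ^ k *
        (Nat.card {π : Equiv.Perm (Fin n) //
          π.cycleType.card + (n - π.support.card) = n - k} : ℤ) := by
  have hμ := mu_eq_Fsum μ hbot hrec
  set P : Setoid (Fin n) → Prop := fun σ => Nat.card (Quotient σ) = n - k with hP
  have h1 : (∑ᶠ σ ∈ {σ : Setoid (Fin n) | Nat.card (Quotient σ) = n - k}, μ σ)
      = ∑ σ ∈ univ.filter P, μ σ := by
    rw [← finsum_mem_coe_finset]
    congr 1
    ext σ; simp [hP]
  rw [h1, Finset.sum_congr rfl (fun σ _ => hμ σ)]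
  -- each summand: Fsum σ = (-1)^k * (cFiber σ).card
  have h2 : ∀ σ ∈ univ.filter P, Fsum σ = (-1) ^ k * ((cFiber σ).card : ℤ) := by
    intro σ hσ
    have hPσ : Nat.card (Quotient σ) = n - k := by simpa [hP] using hσ
    rw [Fsum]
    have hsgn : ∀ π ∈ cFiber σ, (Equiv.Perm.sign π : ℤ) = (-1) ^ k := by
      intro π hπ
      have hπσ : SameCycle.setoid π = σ := by simpa [cFiber] using hπ
      rw [signEq π (quotCard π), hπσ, hPσ]
      congr 1
      omega
    rw [Finset.sum_congr rfl hsgn]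
    simp [mul_comm]
  rw [Finset.sum_congr rfl h2, ← Finset.mul_sum]
  congr 1
  -- count permutations fiberwise
  have h3 : Nat.card {π : Equiv.Perm (Fin n) //
        π.cycleType.card + (n - π.support.card) = n - k}
      = (univ.filter (fun π : Equiv.Perm (Fin n) =>
          Nat.card (Quotient (SameCycle.setoid π)) = n - k)).card := by
    rw [Nat.card_eq_fintype_card, Fintype.card_subtype]
    congr 1
    ext π
    simp only [mem_filter, mem_univ, true_and]
    rw [quotCard π]
  rw [h3]
  rw [Finset.card_eq_sum_card_fiberwise (f := fun π => SameCycle.setoid π)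
    (t := univ.filter P) (fun π hπ => by simpa [hP] using (mem_filter.1 hπ).2)]
  push_cast
  apply Finset.sum_congr rfl
  intro σ hσ
  norm_cast
  congr 1
  ext π
  simp only [cFiber, mem_filter, mem_univ, true_and]
  constructor
  · intro h
    refine ⟨?_, h⟩
    rw [h]
    simpa [hP] using hσ
  · rintro ⟨_, h⟩
    exact h
end

section
/- For all integers m ≥ 1, n ≥ 1 and 0 ≤ k ≤ n−1, the number of colored set partitions of type (m,n) with exactly km+1 blocks whose zero block has exactly m+1 elements equals n·h_{n−k−1}(m, 2m, …, km). -/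
open Finset

/-- Complete homogeneous symmetric polynomial evaluated at a list of ring elements. -/
def hpoly {R : Type*} [CommSemiring R] : ℕ → List R → R
  | 0, _ => 1
  | _ + 1, [] => 0
  | j + 1, a :: l => hpoly (j + 1) l + a * hpoly j (a :: l)
  termination_by j l => (j, l.length)

/-- The colored ground set `X_{m,n} = {0} ⊔ ({1,…,n} × ℤ/mℤ)`, with `none` as basepoint. -/
abbrev ColoredSet (m n : ℕ) := Option (Fin n × ZMod m)

/-- The action of `c ∈ ℤ/mℤ` on `X_{m,n}`: fixes the basepoint and shifts colors. -/
def shift {m n : ℕ} (c : ZMod m) : ColoredSet m n → ColoredSet m n :=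
  Option.map fun p => (p.1, p.2 + c)

/-- A setoid on `X_{m,n}` is a colored set partition of type `(m,n)` if the `ℤ/mℤ`-action
maps blocks to blocks and the induced action on the blocks not containing the basepoint
is free. -/
def IsColored {m n : ℕ} (σ : Setoid (ColoredSet m n)) : Prop :=
  (∀ (c : ZMod m) (x y : ColoredSet m n), σ.r x y → σ.r (shift c x) (shift c y)) ∧
  (∀ (c : ZMod m) (x : ColoredSet m n), ¬ σ.r x none → σ.r (shift c x) x → c = 0)

namespace Stmt5Aux

instance instFiniteOption {α : Type} [Finite α] : Finite (Option α) := by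
  classical
  have := Fintype.ofFinite α
  infer_instance

instance instFiniteSetoid {X : Type} [Finite X] : Finite (Setoid X) :=
  Finite.of_injective (fun s : Setoid X => s.r)
    fun _ _ h => Setoid.ext fun x y => iff_of_eq (congrFun₂ h x y)

lemma card_option (α : Type) [Finite α] : Nat.card (Option α) = Nat.card α + 1 := by
  rw [Nat.card_congr (Equiv.optionEquivSumPUnit.{0,0} α), Nat.card_sum]; simp

lemma card_sigma' {ι : Type} [Fintype ι] (f : ι → Type) [∀ i, Finite (f i)] :
    Nat.card (Σ i, f i) = ∑ i, Nat.card (f i) := by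
  letI : ∀ i, Fintype (f i) := fun i => Fintype.ofFinite _
  simp [Nat.card_eq_fintype_card, Fintype.card_sigma]

/-- Freeness of the `ZMod m` shift action on a partition of `S × ZMod m`. -/
def Free (m : ℕ) {S : Type} (σ : Setoid (S × ZMod m)) : Prop :=
  (∀ (c : ZMod m) (x y : S × ZMod m), σ.r x y → σ.r (x.1, x.2 + c) (y.1, y.2 + c)) ∧
  ∀ (c : ZMod m) (x : S × ZMod m), σ.r (x.1, x.2 + c) x → c = 0

variable {m : ℕ} {S : Type}

lemma Free.sh {σ : Setoid (S × ZMod m)} (h : Free m σ) {s t : S} {c d : ZMod m}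
    (e : ZMod m) (hr : σ.r (s, c) (t, d)) : σ.r (s, c + e) (t, d + e) :=
  h.1 e (s, c) (t, d) hr

lemma Free.cancel {σ : Setoid (S × ZMod m)} (h : Free m σ) {s : S} {c d : ZMod m}
    (hr : σ.r (s, c) (s, d)) : c = d := by
  have := h.2 (c - d) (s, d) (by simpa [sub_add_cancel] using hr)
  rwa [sub_eq_zero] at this

/-- Restriction of a setoid along a map (our own version of `Setoid.comap`). -/
def comapS {α β : Type} (f : α → β) (σ : Setoid β) : Setoid α :=
  ⟨fun a b => σ.r (f a) (f b), ⟨fun _ => σ.refl _, fun h => σ.symm h, fun h h' => σ.trans h h'⟩⟩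

@[simp] lemma comapS_r {α β : Type} (f : α → β) (σ : Setoid β) (a b : α) :
    (comapS f σ).r a b ↔ σ.r (f a) (f b) := Iff.rfl

noncomputable def quotient_comapS_equiv {α β : Type} (f : β → α) (hf : Function.Bijective f)
    (σ : Setoid α) : Quotient (comapS f σ) ≃ Quotient σ := by
  refine Equiv.ofBijective (Quotient.map f (fun ⦃a b⦄ h => show f a ≈ f b from h)) ⟨fun x y => ?_, fun x => ?_⟩
  · induction x using Quotient.ind
    induction y using Quotient.ind
    intro h
    rw [Quotient.map_mk, Quotient.map_mk, Quotient.eq] at h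
    exact Quotient.sound h
  · induction x using Quotient.ind with | _ x => ?_
    obtain ⟨y, rfl⟩ := hf.2 x
    exact ⟨⟦y⟧, rfl⟩

/-- Counting free colored partitions of `Fin N × ZMod m` into `k*m` blocks. -/
noncomputable def cnt (m N k : ℕ) : ℕ :=
  Nat.card {σ : Setoid (Fin N × ZMod m) // Free m σ ∧ Nat.card (Quotient σ) = k * m}

lemma free_comapS {S S' : Type} (e : S' → S) (he : Function.Bijective e)
    {σ : Setoid (S × ZMod m)} (h : Free m σ) : Free m (comapS (Prod.map e id) σ) := by
  constructor
  · rintro c ⟨xs, xc⟩ ⟨ys, yc⟩ hr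
    exact h.1 c (e xs, xc) (e ys, yc) hr
  · rintro c ⟨xs, xc⟩ hr
    exact h.2 c (e xs, xc) hr

lemma cnt_congr (k' : ℕ) {S S' : Type} (e : S ≃ S') :
    Nat.card {σ : Setoid (S × ZMod m) // Free m σ ∧ Nat.card (Quotient σ) = k'}
      = Nat.card {σ : Setoid (S' × ZMod m) // Free m σ ∧ Nat.card (Quotient σ) = k'} := by
  have hb : Function.Bijective (Prod.map e.symm (id : ZMod m → ZMod m)) :=
    e.symm.bijective.prodMap Function.bijective_id
  have hb' : Function.Bijective (Prod.map e (id : ZMod m → ZMod m)) :=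
    e.bijective.prodMap Function.bijective_id
  refine Nat.card_congr ⟨fun σ => ⟨comapS (Prod.map e.symm id) σ.1,
      free_comapS _ e.symm.bijective σ.2.1,
      by rw [Nat.card_congr (quotient_comapS_equiv _ hb _)]; exact σ.2.2⟩,
    fun σ => ⟨comapS (Prod.map e id) σ.1,
      free_comapS _ e.bijective σ.2.1,
      by rw [Nat.card_congr (quotient_comapS_equiv _ hb' _)]; exact σ.2.2⟩,
    fun σ => ?_, fun σ => ?_⟩
  · refine Subtype.ext (Setoid.ext fun a b => ?_)
    show σ.1.r (Prod.map e.symm id (Prod.map e id a)) (Prod.map e.symm id (Prod.map e id b))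
      ↔ σ.1.r a b
    simp [Prod.map]
  · refine Subtype.ext (Setoid.ext fun a b => ?_)
    show σ.1.r (Prod.map e id (Prod.map e.symm id a)) (Prod.map e id (Prod.map e.symm id b))
      ↔ σ.1.r a b
    simp [Prod.map]

/-- the restriction of a setoid on `Option S × ZMod m` to `S × ZMod m`. -/
def restr (σ : Setoid (Option S × ZMod m)) : Setoid (S × ZMod m) :=
  comapS (fun a => (some a.1, a.2)) σ

/-- the extension where the `none` column is a separate orbit of singleton blocks. -/
def ext1 (σ' : Setoid (S × ZMod m)) : Setoid (Option S × ZMod m) := by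
  refine ⟨fun x y => (x.1 = none ∧ y.1 = none ∧ x.2 = y.2) ∨
      (∃ s t, x.1 = some s ∧ y.1 = some t ∧ σ'.r (s, x.2) (t, y.2)), ⟨?_, ?_, ?_⟩⟩
  · rintro ⟨s | s, c⟩
    · exact Or.inl ⟨rfl, rfl, rfl⟩
    · exact Or.inr ⟨s, s, rfl, rfl, σ'.refl _⟩
  · rintro ⟨xs, xc⟩ ⟨ys, yc⟩ (⟨h1, h2, h3⟩ | ⟨s, t, h1, h2, h3⟩)
    · exact Or.inl ⟨h2, h1, h3.symm⟩
    · exact Or.inr ⟨t, s, h2, h1, σ'.symm h3⟩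
  · rintro ⟨xs, xc⟩ ⟨ys, yc⟩ ⟨zs, zc⟩ (⟨h1, h2, h3⟩ | ⟨s, t, h1, h2, h3⟩)
      (⟨g1, g2, g3⟩ | ⟨s', t', g1, g2, g3⟩) <;> simp_all
    exact σ'.iseqv.trans h3 g3

/-- the extension where the `none` column is merged into the orbit of the block `q`. -/
def ext2 (σ' : Setoid (S × ZMod m)) (hσ' : Free m σ') (q : Quotient σ') :
    Setoid (Option S × ZMod m) := by
  refine ⟨fun x y =>
      (∃ s t, x.1 = some s ∧ y.1 = some t ∧ σ'.r (s, x.2) (t, y.2)) ∨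
      (x.1 = none ∧ y.1 = none ∧ x.2 = y.2) ∨
      (∃ t, x.1 = none ∧ y.1 = some t ∧ ⟦(t, y.2 - x.2)⟧ = q) ∨
      (∃ s, x.1 = some s ∧ y.1 = none ∧ ⟦(s, x.2 - y.2)⟧ = q), ⟨?_, ?_, ?_⟩⟩
  · rintro ⟨s | s, c⟩
    · exact Or.inr (Or.inl ⟨rfl, rfl, rfl⟩)
    · exact Or.inl ⟨s, s, rfl, rfl, σ'.refl _⟩
  · rintro ⟨xs, xc⟩ ⟨ys, yc⟩ (⟨s, t, h1, h2, h3⟩ | ⟨h1, h2, h3⟩ | ⟨t, h1, h2, h3⟩ | ⟨s, h1, h2, h3⟩)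
    · exact Or.inl ⟨t, s, h2, h1, σ'.iseqv.symm h3⟩
    · exact Or.inr (Or.inl ⟨h2, h1, h3.symm⟩)
    · exact Or.inr (Or.inr (Or.inr ⟨t, h2, h1, h3⟩))
    · exact Or.inr (Or.inr (Or.inl ⟨s, h2, h1, h3⟩))
  · rintro ⟨xs, xc⟩ ⟨ys, yc⟩ ⟨zs, zc⟩
      (⟨s, t, h1, h2, h3⟩ | ⟨h1, h2, h3⟩ | ⟨t, h1, h2, h3⟩ | ⟨s, h1, h2, h3⟩)
      (⟨s', t', g1, g2, g3⟩ | ⟨g1, g2, g3⟩ | ⟨t', g1, g2, g3⟩ | ⟨s', g1, g2, g3⟩)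
    · -- (1,1)
      subst h1; subst h2; subst g2
      cases Option.some.inj g1
      exact Or.inl ⟨s, t', rfl, rfl, σ'.iseqv.trans h3 g3⟩
    · subst h2; simp at g1
    · subst h2; simp at g1
    · -- (1,4)
      subst h1; subst h2; subst g2
      cases Option.some.inj g1
      refine Or.inr (Or.inr (Or.inr ⟨s, rfl, rfl, ?_⟩))
      have h4 := hσ'.1 (-zc) _ _ h3
      exact (Quotient.sound (by simpa [sub_eq_add_neg] using h4)).trans g3
    · subst h2; simp at g1
    · -- (2,2)
      subst h1; subst h2; subst g2
      exact Or.inr (Or.inl ⟨rfl, rfl, h3.trans g3⟩)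
    · -- (2,3)
      subst h1; subst h2; subst g2; subst h3
      exact Or.inr (Or.inr (Or.inl ⟨t', rfl, rfl, g3⟩))
    · subst h2; simp at g1
    · -- (3,1)
      subst h1; subst h2; subst g2
      cases Option.some.inj g1
      refine Or.inr (Or.inr (Or.inl ⟨t', rfl, rfl, ?_⟩))
      have h4 := hσ'.1 (-xc) _ _ (σ'.iseqv.symm g3)
      exact (Quotient.sound (by simpa [sub_eq_add_neg] using h4)).trans h3
    · subst h2; simp at g1
    · subst h2; simp at g1
    · -- (3,4)
      subst h1; subst h2; subst g2
      cases Option.some.inj g1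
      have h4 : σ'.r (t, yc - xc) (t, yc - zc) := Quotient.exact (h3.trans g3.symm)
      have h5 : yc - xc = yc - zc := hσ'.cancel h4
      exact Or.inr (Or.inl ⟨rfl, rfl, by rwa [sub_right_inj] at h5⟩)
    · subst h2; simp at g1
    · -- (4,2)
      subst h1; subst h2; subst g2; subst g3
      exact Or.inr (Or.inr (Or.inr ⟨s, rfl, rfl, h3⟩))
    · -- (4,3)
      subst h1; subst h2; subst g2
      refine Or.inl ⟨s, t', rfl, rfl, ?_⟩
      have h4 : σ'.r (s, xc - yc) (t', zc - yc) := Quotient.exact (h3.trans g3.symm)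
      simpa [sub_add_cancel] using hσ'.1 yc _ _ h4
    · subst h2; simp at g1

lemma free_restr {σ : Setoid (Option S × ZMod m)} (h : Free m σ) : Free m (restr σ) := by
  constructor
  · rintro c ⟨s, cs⟩ ⟨t, ct⟩ hr
    exact h.1 c (some s, cs) (some t, ct) hr
  · rintro c ⟨s, cs⟩ hr
    exact h.2 c (some s, cs) hr

/-- the presence of another column in the orbit of the `none` column. -/
def Touches (σ : Setoid (Option S × ZMod m)) : Prop :=
  ∃ (s : S) (c d : ZMod m), σ.r (none, c) (some s, d)

lemma free_ext1 {σ' : Setoid (S × ZMod m)} (h : Free m σ') : Free m (ext1 σ') := by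
  constructor
  · rintro c ⟨xs, xc⟩ ⟨ys, yc⟩ (⟨h1, h2, h3⟩ | ⟨s, t, h1, h2, h3⟩)
    · exact Or.inl ⟨h1, h2, by rw [h3]⟩
    · exact Or.inr ⟨s, t, h1, h2, h.1 c _ _ h3⟩
  · rintro c ⟨xs, xc⟩ (⟨h1, h2, h3⟩ | ⟨s, t, h1, h2, h3⟩)
    · simpa using h3
    · obtain rfl : s = t := by rw [h1] at h2; exact Option.some.inj h2
      exact h.2 c (s, xc) h3

lemma untouch_ext1 (σ' : Setoid (S × ZMod m)) : ¬ Touches (ext1 σ') := by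
  rintro ⟨s, c, d, (⟨h1, h2, h3⟩ | ⟨s', t', h1, h2, h3⟩)⟩
  · simp at h2
  · simp at h1

lemma restr_ext1 (σ' : Setoid (S × ZMod m)) : restr (ext1 σ') = σ' := by
  apply Setoid.ext
  intro a b
  constructor
  · rintro (⟨h1, h2, h3⟩ | ⟨s, t, h1, h2, h3⟩)
    · simp at h1
    · obtain rfl : s = a.1 := by simpa using h1.symm
      obtain rfl : t = b.1 := by simpa using h2.symm
      exact h3
  · intro h
    exact Or.inr ⟨a.1, b.1, rfl, rfl, h⟩

lemma ext1_restr {σ : Setoid (Option S × ZMod m)} (hf : Free m σ) (ht : ¬ Touches σ) :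
    ext1 (restr σ) = σ := by
  apply Setoid.ext
  rintro ⟨xs, xc⟩ ⟨ys, yc⟩
  constructor
  · rintro (⟨h1, h2, h3⟩ | ⟨s, t, h1, h2, h3⟩)
    · subst h1; subst h2; subst h3; exact σ.refl _
    · subst h1; subst h2; exact h3
  · intro h
    match xs, ys with
    | none, none =>
      exact Or.inl ⟨rfl, rfl, hf.cancel h⟩
    | none, some t => exact absurd ⟨t, xc, yc, h⟩ ht
    | some s, none => exact absurd ⟨s, yc, xc, σ.symm h⟩ ht
    | some s, some t => exact Or.inr ⟨s, t, rfl, rfl, h⟩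

lemma free_ext2 {σ' : Setoid (S × ZMod m)} (h : Free m σ') (q : Quotient σ') :
    Free m (ext2 σ' h q) := by
  constructor
  · rintro c ⟨xs, xc⟩ ⟨ys, yc⟩ (⟨s, t, h1, h2, h3⟩ | ⟨h1, h2, h3⟩ | ⟨t, h1, h2, h3⟩ | ⟨s, h1, h2, h3⟩)
    · exact Or.inl ⟨s, t, h1, h2, h.1 c _ _ h3⟩
    · exact Or.inr (Or.inl ⟨h1, h2, by rw [h3]⟩)
    · refine Or.inr (Or.inr (Or.inl ⟨t, h1, h2, ?_⟩))
      simpa [add_sub_add_right_eq_sub] using h3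
    · refine Or.inr (Or.inr (Or.inr ⟨s, h1, h2, ?_⟩))
      simpa [add_sub_add_right_eq_sub] using h3
  · rintro c ⟨xs, xc⟩ (⟨s, t, h1, h2, h3⟩ | ⟨h1, h2, h3⟩ | ⟨t, h1, h2, h3⟩ | ⟨s, h1, h2, h3⟩)
    · obtain rfl : s = t := by rw [h1] at h2; exact Option.some.inj h2
      exact h.2 c (s, xc) h3
    · simpa using h3
    · rw [h1] at h2; simp at h2
    · rw [h1] at h2; simp at h2

lemma touches_ext2 {σ' : Setoid (S × ZMod m)} (h : Free m σ') (q : Quotient σ') :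
    Touches (ext2 σ' h q) := by
  refine ⟨q.out.1, 0, q.out.2, Or.inr (Or.inr (Or.inl ⟨q.out.1, rfl, rfl, ?_⟩))⟩
  simp [Quotient.out_eq]

lemma restr_ext2 {σ' : Setoid (S × ZMod m)} (h : Free m σ') (q : Quotient σ') :
    restr (ext2 σ' h q) = σ' := by
  apply Setoid.ext
  intro a b
  constructor
  · rintro (⟨s, t, h1, h2, h3⟩ | ⟨h1, h2, h3⟩ | ⟨t, h1, h2, h3⟩ | ⟨s, h1, h2, h3⟩)
    · obtain rfl : s = a.1 := by simpa using h1.symm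
      obtain rfl : t = b.1 := by simpa using h2.symm
      exact h3
    · simp at h1
    · simp at h1
    · simp at h2
  · intro hab
    exact Or.inl ⟨a.1, b.1, rfl, rfl, hab⟩

lemma ext2_none_some {σ' : Setoid (S × ZMod m)} {h : Free m σ'} {q : Quotient σ'}
    {c d : ZMod m} {t : S} (hr : (ext2 σ' h q).r (none, c) (some t, d)) :
    ⟦(t, d - c)⟧ = q := by
  rcases hr with (⟨s', t', h1, h2, h3⟩ | ⟨h1, h2, h3⟩ | ⟨t', h1, h2, h3⟩ | ⟨s', h1, h2, h3⟩)
  · simp at h1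
  · simp at h2
  · cases Option.some.inj h2
    exact h3
  · simp at h1

lemma ext2_restr {σ : Setoid (Option S × ZMod m)} (hf : Free m σ) {s₀ : S} {c₀ d₀ : ZMod m}
    (hw : σ.r (none, c₀) (some s₀, d₀)) :
    ext2 (restr σ) (free_restr hf) ⟦(s₀, d₀ - c₀)⟧ = σ := by
  apply Setoid.ext
  rintro ⟨xs, xc⟩ ⟨ys, yc⟩
  constructor
  · rintro (⟨s, t, h1, h2, h3⟩ | ⟨h1, h2, h3⟩ | ⟨t, h1, h2, h3⟩ | ⟨s, h1, h2, h3⟩)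
    · subst h1; subst h2; exact h3
    · subst h1; subst h2; subst h3; exact σ.refl _
    · subst h1; subst h2
      have h4 : (restr σ).r (t, yc - xc) (s₀, d₀ - c₀) := Quotient.exact h3
      have h5 : σ.r (some t, yc) (some s₀, d₀ - c₀ + xc) := by
        simpa [sub_add_cancel] using hf.sh xc h4
      have h6 : σ.r (none, xc) (some s₀, d₀ - c₀ + xc) := by
        have := hf.sh (xc - c₀) hw
        have e1 : c₀ + (xc - c₀) = xc := by ring
        have e2 : d₀ + (xc - c₀) = d₀ - c₀ + xc := by ring
        rwa [e1, e2] at this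
      exact σ.trans h6 (σ.symm h5)
    · subst h1; subst h2
      have h4 : (restr σ).r (s, xc - yc) (s₀, d₀ - c₀) := Quotient.exact h3
      have h5 : σ.r (some s, xc) (some s₀, d₀ - c₀ + yc) := by
        simpa [sub_add_cancel] using hf.sh yc h4
      have h6 : σ.r (none, yc) (some s₀, d₀ - c₀ + yc) := by
        have := hf.sh (yc - c₀) hw
        have e1 : c₀ + (yc - c₀) = yc := by ring
        have e2 : d₀ + (yc - c₀) = d₀ - c₀ + yc := by ring
        rwa [e1, e2] at this
      exact σ.trans h5 (σ.symm h6)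
  · intro h
    match xs, ys with
    | some s, some t => exact Or.inl ⟨s, t, rfl, rfl, h⟩
    | none, none => exact Or.inr (Or.inl ⟨rfl, rfl, hf.cancel h⟩)
    | none, some t =>
      refine Or.inr (Or.inr (Or.inl ⟨t, rfl, rfl, Quotient.sound ?_⟩))
      have h5 : σ.r (none, c₀) (some t, yc + (c₀ - xc)) := by
        have := hf.sh (c₀ - xc) h
        have e1 : xc + (c₀ - xc) = c₀ := by ring
        rwa [e1] at this
      have h6 : σ.r (some t, yc + (c₀ - xc)) (some s₀, d₀) := σ.trans (σ.symm h5) hw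
      have h7 := hf.sh (-c₀) h6
      have e2 : yc + (c₀ - xc) + -c₀ = yc - xc := by ring
      have e3 : d₀ + -c₀ = d₀ - c₀ := by ring
      rwa [e2, e3] at h7
    | some s, none =>
      refine Or.inr (Or.inr (Or.inr ⟨s, rfl, rfl, Quotient.sound ?_⟩))
      have h' := σ.symm h
      have h5 : σ.r (none, c₀) (some s, xc + (c₀ - yc)) := by
        have := hf.sh (c₀ - yc) h'
        have e1 : yc + (c₀ - yc) = c₀ := by ring
        rwa [e1] at this
      have h6 : σ.r (some s, xc + (c₀ - yc)) (some s₀, d₀) := σ.trans (σ.symm h5) hw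
      have h7 := hf.sh (-c₀) h6
      have e2 : xc + (c₀ - yc) + -c₀ = xc - yc := by ring
      have e3 : d₀ + -c₀ = d₀ - c₀ := by ring
      rwa [e2, e3] at h7

lemma card_restr_touch {σ : Setoid (Option S × ZMod m)}
    (hf : Free m σ) (ht : Touches σ) :
    Nat.card (Quotient (restr σ)) = Nat.card (Quotient σ) := by
  refine Nat.card_congr (Equiv.ofBijective
    (Quotient.map (fun a => (some a.1, a.2)) (fun ⦃a b⦄ h => show (some a.1, a.2) ≈ (some b.1, b.2) from h)) ⟨fun x y => ?_, fun x => ?_⟩)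
  · induction x using Quotient.ind
    induction y using Quotient.ind
    intro h
    rw [Quotient.map_mk, Quotient.map_mk, Quotient.eq] at h
    exact Quotient.sound h
  · induction x using Quotient.ind with | _ x => ?_
    obtain ⟨xs, xc⟩ := x
    match xs with
    | some s => exact ⟨⟦(s, xc)⟧, rfl⟩
    | none =>
      obtain ⟨s, c, d, hr⟩ := ht
      have h5 : σ.r (none, xc) (some s, d + (xc - c)) := by
        have := hf.sh (xc - c) hr
        have e1 : c + (xc - c) = xc := by ring
        rwa [e1] at this
      exact ⟨⟦(s, d + (xc - c))⟧, (Quotient.sound (σ.symm h5) : _)⟩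

lemma card_restr_untouch [Finite S] [NeZero m] {σ : Setoid (Option S × ZMod m)}
    (hf : Free m σ) (ht : ¬ Touches σ) :
    Nat.card (Quotient σ) = Nat.card (Quotient (restr σ)) + m := by
  have e : Quotient (restr σ) ⊕ ZMod m ≃ Quotient σ := by
    refine Equiv.ofBijective
      (Sum.elim (Quotient.map (fun a => (some a.1, a.2)) (fun ⦃a b⦄ h => show (some a.1, a.2) ≈ (some b.1, b.2) from h))
        (fun c => ⟦(none, c)⟧)) ⟨fun x y => ?_, fun x => ?_⟩
    · match x, y with
      | Sum.inl x, Sum.inl y =>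
        induction x using Quotient.ind
        induction y using Quotient.ind
        intro h
        simp only [Sum.elim_inl, Quotient.map_mk, Quotient.eq] at h
        exact congrArg Sum.inl (Quotient.sound h)
      | Sum.inl x, Sum.inr c =>
        induction x using Quotient.ind with | _ x => ?_
        intro h
        simp only [Sum.elim_inl, Sum.elim_inr, Quotient.map_mk, Quotient.eq] at h
        exact absurd ⟨x.1, c, x.2, σ.symm h⟩ ht
      | Sum.inr c, Sum.inl y =>
        induction y using Quotient.ind with | _ y => ?_
        intro h
        simp only [Sum.elim_inl, Sum.elim_inr, Quotient.map_mk, Quotient.eq] at h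
        exact absurd ⟨y.1, c, y.2, h⟩ ht
      | Sum.inr c, Sum.inr d =>
        intro h
        simp only [Sum.elim_inr, Quotient.eq] at h
        have : c = d := hf.cancel h
        rw [this]
    · induction x using Quotient.ind with | _ x => ?_
      obtain ⟨xs, xc⟩ := x
      match xs with
      | some s => exact ⟨Sum.inl ⟦(s, xc)⟧, rfl⟩
      | none => exact ⟨Sum.inr xc, rfl⟩
  rw [← Nat.card_congr e, Nat.card_sum]
  congr 1
  rw [Nat.card_eq_fintype_card, ZMod.card]

lemma card_ext1 [Finite S] [NeZero m] {σ' : Setoid (S × ZMod m)} (h : Free m σ') :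
    Nat.card (Quotient (ext1 σ')) = Nat.card (Quotient σ') + m := by
  have := card_restr_untouch (free_ext1 h) (untouch_ext1 σ')
  rwa [restr_ext1] at this

lemma card_ext2 {σ' : Setoid (S × ZMod m)} (h : Free m σ') (q : Quotient σ') :
    Nat.card (Quotient (ext2 σ' h q)) = Nat.card (Quotient σ') := by
  have := card_restr_touch (free_ext2 h q) (touches_ext2 h q)
  rw [restr_ext2] at this
  exact this.symm

lemma card_option_setoids [Finite S] [NeZero m] (k : ℕ) :
    Nat.card {σ : Setoid (Option S × ZMod m) //
        Free m σ ∧ Nat.card (Quotient σ) = (k + 1) * m}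
      = Nat.card {σ' : Setoid (S × ZMod m) // Free m σ' ∧ Nat.card (Quotient σ') = k * m}
        + Nat.card {σ' : Setoid (S × ZMod m) //
            Free m σ' ∧ Nat.card (Quotient σ') = (k + 1) * m} * ((k + 1) * m) := by
  classical
  set D := {σ : Setoid (Option S × ZMod m) //
      Free m σ ∧ Nat.card (Quotient σ) = (k + 1) * m} with hD
  set T1 := {σ' : Setoid (S × ZMod m) // Free m σ' ∧ Nat.card (Quotient σ') = k * m} with hT1
  set T2 := {σ' : Setoid (S × ZMod m) //
      Free m σ' ∧ Nat.card (Quotient σ') = (k + 1) * m} with hT2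
  haveI : Finite D := by unfold D; infer_instance
  have hsplit : Nat.card D
      = Nat.card {x : D // Touches x.1} + Nat.card {x : D // ¬ Touches x.1} := by
    rw [← Nat.card_congr (Equiv.sumCompl (fun x : D => Touches x.1)), Nat.card_sum]
  -- untouched part
  have huntouch : Nat.card {x : D // ¬ Touches x.1} = Nat.card T1 := by
    refine Nat.card_congr ⟨fun x => ⟨restr x.1.1, free_restr x.1.2.1, ?_⟩,
      fun σ' => ⟨⟨ext1 σ'.1, free_ext1 σ'.2.1, ?_⟩, untouch_ext1 σ'.1⟩,
      fun x => ?_, fun σ' => ?_⟩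
    · have h1 := card_restr_untouch x.1.2.1 x.2
      have h2 := x.1.2.2
      have h3 : (k + 1) * m = k * m + m := by ring
      omega
    · rw [card_ext1 σ'.2.1, σ'.2.2]; ring
    · exact Subtype.ext (Subtype.ext (ext1_restr x.1.2.1 x.2))
    · exact Subtype.ext (restr_ext1 σ'.1)
  -- touched part
  have htouch : Nat.card {x : D // Touches x.1} = Nat.card T2 * ((k + 1) * m) := by
    set F : {x : D // Touches x.1} → T2 := fun x =>
      ⟨restr x.1.1, free_restr x.1.2.1, by rw [card_restr_touch x.1.2.1 x.2]; exact x.1.2.2⟩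
      with hF
    rw [← Nat.card_congr (Equiv.sigmaFiberEquiv F)]
    letI : Fintype T2 := Fintype.ofFinite _
    rw [card_sigma']
    have hfib : ∀ σ' : T2, Nat.card {y // F y = σ'} = (k + 1) * m := by
      rintro ⟨σ'₁, hfree', hcard'⟩
      suffices e : {y // F y = ⟨σ'₁, hfree', hcard'⟩} ≃ Quotient σ'₁ by
        rw [Nat.card_congr e, hcard']
      refine
        ⟨fun y => Quotient.mk σ'₁ (y.1.2.choose,
            y.1.2.choose_spec.choose_spec.choose - y.1.2.choose_spec.choose),
          fun q => ⟨⟨⟨ext2 σ'₁ hfree' q, free_ext2 hfree' q,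
              by rw [card_ext2 hfree' q, hcard']⟩, touches_ext2 hfree' q⟩,
            Subtype.ext (restr_ext2 hfree' q)⟩,
          fun y => ?_, fun q => ?_⟩
      · obtain ⟨⟨⟨σ, hσfree, hσcard⟩, ht⟩, hFy⟩ := y
        have hres : restr σ = σ'₁ := congrArg Subtype.val hFy
        refine Subtype.ext (Subtype.ext (Subtype.ext ?_))
        show ext2 σ'₁ hfree' _ = σ
        subst hres
        exact ext2_restr hσfree ht.choose_spec.choose_spec.choose_spec
      · exact ext2_none_some
          ((touches_ext2 hfree' q).choose_spec.choose_spec.choose_spec)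
    rw [Finset.sum_congr rfl fun σ' _ => hfib σ']
    rw [Finset.sum_const, Finset.card_univ, smul_eq_mul, Nat.card_eq_fintype_card]
  rw [hsplit, huntouch, htouch]
  ring

lemma cnt_succ_succ [NeZero m] (N k : ℕ) :
    cnt m (N + 1) (k + 1) = cnt m N k + cnt m N (k + 1) * ((k + 1) * m) := by
  simp only [cnt]
  rw [cnt_congr ((k + 1) * m) (finSuccEquiv N), card_option_setoids k]

lemma cnt_zero_zero : cnt m 0 0 = 1 := by
  have he : IsEmpty (Fin 0 × ZMod m) := by infer_instance
  have hq : ∀ σ : Setoid (Fin 0 × ZMod m), IsEmpty (Quotient σ) :=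
    fun σ => ⟨fun q => Quotient.ind (motive := fun _ => False) (fun a => isEmptyElim a) q⟩
  have hsub : ∀ σ τ : Setoid (Fin 0 × ZMod m), σ = τ :=
    fun σ τ => Setoid.ext fun a => isEmptyElim a
  simp only [cnt]
  have : Nonempty {σ : Setoid (Fin 0 × ZMod m) //
      Free m σ ∧ Nat.card (Quotient σ) = 0 * m} := by
    refine ⟨⟨⟨fun _ _ => True, ⟨fun _ => trivial, fun {_ _} _ => trivial, fun {_ _ _} _ _ => trivial⟩⟩,
      ⟨fun c x => isEmptyElim x, fun c x => isEmptyElim x⟩, ?_⟩⟩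
    rw [Nat.zero_mul, Nat.card_eq_zero]
    exact Or.inl (hq _)
  haveI : Subsingleton {σ : Setoid (Fin 0 × ZMod m) //
      Free m σ ∧ Nat.card (Quotient σ) = 0 * m} :=
    ⟨fun a b => Subtype.ext (hsub _ _)⟩
  exact Nat.card_unique

lemma cnt_zero_succ [NeZero m] (k : ℕ) : cnt m 0 (k + 1) = 0 := by
  simp only [cnt]
  refine Nat.card_eq_zero.mpr (Or.inl ⟨fun σ => ?_⟩)
  have hq : IsEmpty (Quotient σ.1) := ⟨fun q => Quotient.ind (motive := fun _ => False) (fun a => isEmptyElim a) q⟩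
  have h0 : Nat.card (Quotient σ.1) = 0 := Nat.card_eq_zero.mpr (Or.inl hq)
  have := σ.2.2
  rw [h0] at this
  have hm : m ≠ 0 := NeZero.ne m
  exact absurd this.symm (Nat.mul_ne_zero (Nat.succ_ne_zero k) hm)

lemma cnt_succ_zero [NeZero m] (N : ℕ) : cnt m (N + 1) 0 = 0 := by
  simp only [cnt]
  refine Nat.card_eq_zero.mpr (Or.inl ⟨fun σ => ?_⟩)
  have hne : Nonempty (Quotient σ.1) := ⟨⟦(0, 0)⟧⟩
  have hpos : 0 < Nat.card (Quotient σ.1) := Nat.card_pos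
  have := σ.2.2
  omega

lemma cnt_of_lt [NeZero m] {N k : ℕ} (h : N < k) : cnt m N k = 0 := by
  induction N generalizing k with
  | zero =>
    match k, h with
    | k + 1, _ => exact cnt_zero_succ k
  | succ N ih =>
    match k, h with
    | k + 1, h =>
      rw [cnt_succ_succ, ih (by omega), ih (by omega)]
      simp

lemma hpoly_append : ∀ (j : ℕ) (l : List ℕ) (a : ℕ),
    hpoly (j + 1) (l ++ [a]) = hpoly (j + 1) l + a * hpoly j (l ++ [a])
  | j, [], a => by
    rw [List.nil_append]
    conv_lhs => rw [hpoly]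
  | 0, b :: l', a => by
    rw [List.cons_append]
    conv_lhs => rw [hpoly]
    conv_lhs => rw [hpoly_append 0 l' a]
    simp only [hpoly]
    ring
  | (j' + 1), b :: l', a => by
    have h1 := hpoly_append (j' + 1) l' a
    have h2 := hpoly_append j' (b :: l') a
    rw [List.cons_append] at h2
    have e1 : hpoly (j' + 1 + 1) (b :: l')
        = hpoly (j' + 1 + 1) l' + b * hpoly (j' + 1) (b :: l') := by rw [hpoly]
    have e2 : hpoly (j' + 1) (b :: (l' ++ [a]))
        = hpoly (j' + 1) (l' ++ [a]) + b * hpoly j' (b :: (l' ++ [a])) := by rw [hpoly]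
    rw [List.cons_append]
    conv_lhs => rw [hpoly]
    conv_lhs => rw [h1]
    conv_lhs => rw [h2]
    conv_rhs => rw [e1]
    conv_rhs => rw [e2]
    ring
  termination_by j l => (j, l.length)

lemma cnt_eq_hpoly [NeZero m] {N k : ℕ} (h : k ≤ N) :
    cnt m N k = hpoly (N - k) ((List.range k).map fun j => (j + 1) * m) := by
  induction N generalizing k with
  | zero =>
    obtain rfl : k = 0 := Nat.le_zero.mp h
    rw [cnt_zero_zero]
    simp [hpoly]
  | succ N ih =>
    match k, h with
    | 0, _ =>
      rw [cnt_succ_zero]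
      simp only [List.range_zero, List.map_nil, Nat.sub_zero]
      rw [hpoly]
    | k + 1, h =>
      rw [cnt_succ_succ]
      have hL : (List.range (k + 1)).map (fun j => (j + 1) * m)
          = ((List.range k).map fun j => (j + 1) * m) ++ [(k + 1) * m] := by
        rw [List.range_succ, List.map_append]
        rfl
      rcases Nat.lt_or_ge N (k + 1) with hlt | hge
      · obtain rfl : k = N := by omega
        rw [cnt_of_lt (Nat.lt_succ_self _), ih (le_refl _)]
        simp [Nat.sub_self, hpoly]
      · rw [ih (by omega), ih hge]
        have h1 : N + 1 - (k + 1) = (N - (k + 1)) + 1 := by omega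
        have h2 : N - k = (N - (k + 1)) + 1 := by omega
        rw [h1, hL, hpoly_append, h2]
        ring

section TopLevel

variable {n : ℕ}

/-- the inclusion of the punctured colored set into `ColoredSet m n`. -/
def iota (z : Fin n) (x : {i : Fin n // i ≠ z} × ZMod m) : ColoredSet m n :=
  some (x.1.1, x.2)

/-- `z` is the unique column of the zero block of `σ`. -/
def Hz (σ : Setoid (ColoredSet m n)) (z : Fin n) : Prop :=
  ∀ x, σ.r x none ↔ (x = none ∨ ∃ c, x = some (z, c))

lemma Hz_unique {σ : Setoid (ColoredSet m n)} {z z' : Fin n}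
    (h : Hz σ z) (h' : Hz σ z') : z = z' := by
  have h1 : σ.r (some (z, 0)) none := (h _).mpr (Or.inr ⟨0, rfl⟩)
  rcases (h' _).mp h1 with h2 | ⟨c, h2⟩
  · simp at h2
  · obtain ⟨h3, -⟩ := Prod.mk.injEq .. ▸ Option.some.inj h2
    exact h3

lemma exists_Hz [NeZero m] {σ : Setoid (ColoredSet m n)} (hc : IsColored σ)
    (hcard : Nat.card {x : ColoredSet m n // σ.r x none} = m + 1) :
    ∃ z, Hz σ z := by
  have hm : m ≠ 0 := NeZero.ne m
  have hnt : Nontrivial {x : ColoredSet m n // σ.r x none} := by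
    rw [← Finite.one_lt_card_iff_nontrivial, hcard]
    omega
  obtain ⟨a, b, hab⟩ := hnt
  have hex : ∃ x : ColoredSet m n, σ.r x none ∧ x ≠ none := by
    by_cases ha : (a : ColoredSet m n) = none
    · refine ⟨b, b.2, fun hb => hab ?_⟩
      exact Subtype.ext (by rw [ha, hb])
    · exact ⟨a, a.2, ha⟩
  obtain ⟨x, hx, hne⟩ := hex
  match x, hx, hne with
  | some (i, d), hx, _ =>
    have claim : ∀ c, σ.r (some (i, c)) none := by
      intro c
      have := hc.1 (c - d) _ _ hx
      have e : d + (c - d) = c := by ring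
      simpa [shift, e] using this
    refine ⟨i, fun x => ⟨fun hx' => ?_, fun hx' => ?_⟩⟩
    · -- surjectivity of the injection Option (ZMod m) → zero block
      have hinj : Function.Injective
          (fun o : Option (ZMod m) => (Option.elim o ⟨none, σ.refl _⟩
            (fun c => ⟨some (i, c), claim c⟩) : {x : ColoredSet m n // σ.r x none})) := by
        rintro (_ | c) (_ | c') h <;> simp_all [Subtype.ext_iff]
      have hbij := (Nat.bijective_iff_injective_and_card _).mpr
        ⟨hinj, by rw [card_option, Nat.card_eq_fintype_card, ZMod.card, hcard]⟩
      obtain ⟨o, ho⟩ := hbij.2 ⟨x, hx'⟩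
      match o, ho with
      | none, ho => exact Or.inl (congrArg Subtype.val ho).symm
      | some c, ho => exact Or.inr ⟨c, (congrArg Subtype.val ho).symm⟩
    · rcases hx' with rfl | ⟨c, rfl⟩
      · exact σ.refl _
      · exact claim c

lemma zblock_card [NeZero m] {σ : Setoid (ColoredSet m n)} {z : Fin n} (hz : Hz σ z) :
    Nat.card {x : ColoredSet m n // σ.r x none} = m + 1 := by
  have e : Option (ZMod m) ≃ {x : ColoredSet m n // σ.r x none} := by
    refine Equiv.ofBijective
      (fun o : Option (ZMod m) => (Option.elim o ⟨none, σ.refl _⟩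
        (fun c => ⟨some (z, c), (hz _).mpr (Or.inr ⟨c, rfl⟩)⟩))) ⟨?_, ?_⟩
    · rintro (_ | c) (_ | c') h <;> simp_all [Subtype.ext_iff]
    · rintro ⟨x, hx⟩
      rcases (hz x).mp hx with rfl | ⟨c, rfl⟩
      · exact ⟨none, rfl⟩
      · exact ⟨some c, rfl⟩
  rw [← Nat.card_congr e, card_option, Nat.card_eq_fintype_card, ZMod.card]

/-- restriction of a colored setoid to the complement of the zero column. -/
def resZ (σ : Setoid (ColoredSet m n)) (z : Fin n) : Setoid ({i : Fin n // i ≠ z} × ZMod m) :=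
  comapS (iota z) σ

lemma free_resZ {σ : Setoid (ColoredSet m n)} {z : Fin n}
    (hc : IsColored σ) (hz : Hz σ z) : Free m (resZ σ z) := by
  constructor
  · intro c x y h
    exact hc.1 c (iota z x) (iota z y) h
  · intro c x h
    refine hc.2 c (iota z x) (fun hh => ?_) h
    rcases (hz _).mp hh with h1 | ⟨c', h1⟩
    · simp [iota] at h1
    · exact x.1.2 (congrArg (fun o => (Option.getD o (z, 0)).1) h1)

lemma quot_resZ [NeZero m] {σ : Setoid (ColoredSet m n)} {z : Fin n} (hz : Hz σ z) :
    Nat.card (Quotient σ) = Nat.card (Quotient (resZ σ z)) + 1 := by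
  classical
  have e : Option (Quotient (resZ σ z)) ≃ Quotient σ := by
    refine Equiv.ofBijective
      (fun o => Option.elim o ⟦none⟧ (Quotient.map (iota z) (fun a b h => h))) ⟨?_, ?_⟩
    · rintro (_ | q) (_ | q') h
      · rfl
      · induction q' using Quotient.ind with | _ a => ?_
        simp only [Option.elim, Quotient.map_mk] at h
        replace h := Quotient.exact h
        rcases (hz _).mp (σ.symm h) with h1 | ⟨c', h1⟩
        · simp [iota] at h1
        · exact absurd (congrArg (fun o => (Option.getD o (z, 0)).1) h1) a.1.2
      · induction q using Quotient.ind with | _ a => ?_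
        simp only [Option.elim, Quotient.map_mk] at h
        replace h := Quotient.exact h
        rcases (hz _).mp h with h1 | ⟨c', h1⟩
        · simp [iota] at h1
        · exact absurd (congrArg (fun o => (Option.getD o (z, 0)).1) h1) a.1.2
      · induction q using Quotient.ind with | _ a => ?_
        induction q' using Quotient.ind with | _ b => ?_
        simp only [Option.elim, Quotient.map_mk] at h
        have h2 := Quotient.exact h
        exact congrArg some (Quotient.sound h2)
    · intro x
      induction x using Quotient.ind with | _ x => ?_
      match x with
      | none => exact ⟨none, rfl⟩
      | some (i, c) =>
        by_cases h : i = z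
        · subst h
          refine ⟨none, Quotient.sound (σ.symm ((hz _).mpr (Or.inr ⟨c, rfl⟩)))⟩
        · exact ⟨some ⟦(⟨i, h⟩, c)⟧, rfl⟩
  rw [← Nat.card_congr e, card_option]

/-- a setoid on `Option α` extending a setoid on `α` with `none` a singleton. -/
def optS {α : Type} (τ : Setoid α) : Setoid (Option α) := by
  refine ⟨fun x y => (x = none ∧ y = none) ∨ ∃ a b, x = some a ∧ y = some b ∧ τ.r a b,
    ⟨?_, ?_, ?_⟩⟩
  · rintro (_ | a)
    · exact Or.inl ⟨rfl, rfl⟩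
    · exact Or.inr ⟨a, a, rfl, rfl, τ.refl _⟩
  · rintro x y (⟨h1, h2⟩ | ⟨a, b, h1, h2, h3⟩)
    · exact Or.inl ⟨h2, h1⟩
    · exact Or.inr ⟨b, a, h2, h1, τ.symm h3⟩
  · rintro x y zz (⟨h1, h2⟩ | ⟨a, b, h1, h2, h3⟩) (⟨g1, g2⟩ | ⟨a', b', g1, g2, g3⟩)
    · exact Or.inl ⟨h1, g2⟩
    · rw [h2] at g1; simp at g1
    · rw [h2] at g1; simp at g1
    · rw [h2] at g1
      cases Option.some.inj g1
      exact Or.inr ⟨a, b', h1, g2, τ.trans h3 g3⟩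

/-- collapse `ColoredSet m n` onto the punctured set, sending the zero column to `none`. -/
def phiZ (z : Fin n) : ColoredSet m n → Option ({i : Fin n // i ≠ z} × ZMod m)
  | none => none
  | some (i, c) => if h : i = z then none else some (⟨i, h⟩, c)

lemma phi_iota (z : Fin n) (x : {i : Fin n // i ≠ z} × ZMod m) :
    phiZ z (iota z x) = some x := by
  show (if h : x.1.1 = z then none else some (⟨x.1.1, h⟩, x.2)) = some x
  rw [dif_neg x.1.2]

lemma phi_none_iff (z : Fin n) (x : ColoredSet m n) :
    phiZ z x = none ↔ (x = none ∨ ∃ c, x = some (z, c)) := by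
  match x with
  | none => simp [phiZ]
  | some (i, c) =>
    by_cases h : i = z
    · subst h
      simp [phiZ]
    · simp [phiZ, h]

lemma phi_some {z : Fin n} {x : ColoredSet m n} {a : {i : Fin n // i ≠ z} × ZMod m}
    (h : phiZ z x = some a) : x = iota z a := by
  match x with
  | none => simp [phiZ] at h
  | some (i, c) =>
    rw [show phiZ z (some (i, c)) = if h : i = z then none else some (⟨i, h⟩, c) from rfl] at h
    by_cases hi : i = z
    · rw [dif_pos hi] at h; simp at h
    · rw [dif_neg hi] at h
      cases Option.some.inj h
      rfl

lemma phi_shift (z : Fin n) (c : ZMod m) (x : ColoredSet m n) :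
    phiZ z (shift c x) = Option.map (fun a => (a.1, a.2 + c)) (phiZ z x) := by
  match x with
  | none => rfl
  | some (i, d) =>
    show phiZ z (some (i, d + c)) = Option.map (fun a => (a.1, a.2 + c)) (phiZ z (some (i, d)))
    by_cases hi : i = z
    · subst hi
      simp [phiZ]
    · simp [phiZ, hi]

/-- the extension of a free setoid on the punctured set to a colored setoid. -/
def extZ (z : Fin n) (σ' : Setoid ({i : Fin n // i ≠ z} × ZMod m)) :
    Setoid (ColoredSet m n) :=
  comapS (phiZ z) (optS σ')

lemma Hz_extZ (z : Fin n) (σ' : Setoid ({i : Fin n // i ≠ z} × ZMod m)) :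
    Hz (extZ z σ') z := by
  intro x
  show (optS σ').r (phiZ z x) (phiZ z none) ↔ _
  rw [← phi_none_iff z x]
  show (optS σ').r (phiZ z x) none ↔ _
  constructor
  · rintro (⟨h1, -⟩ | ⟨a, b, h1, h2, h3⟩)
    · exact h1
    · simp at h2
  · intro h
    exact Or.inl ⟨h, rfl⟩

lemma isColored_extZ (z : Fin n) {σ' : Setoid ({i : Fin n // i ≠ z} × ZMod m)}
    (hf : Free m σ') : IsColored (extZ z σ') := by
  constructor
  · intro c x y h
    show (optS σ').r (phiZ z (shift c x)) (phiZ z (shift c y))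
    rw [phi_shift, phi_shift]
    rcases h with ⟨h1, h2⟩ | ⟨a, b, h1, h2, h3⟩
    · rw [h1, h2]
    · rw [h1, h2]
      exact Or.inr ⟨(a.1, a.2 + c), (b.1, b.2 + c), rfl, rfl, hf.1 c a b h3⟩
  · intro c x hnot hsh
    have hxn : phiZ z x ≠ none := by
      intro hn
      exact hnot ((Hz_extZ z σ' x).mpr ((phi_none_iff z x).mp hn))
    obtain ⟨a, ha⟩ := Option.ne_none_iff_exists'.mp hxn
    have hsh' : (optS σ').r (phiZ z (shift c x)) (phiZ z x) := hsh
    rw [phi_shift, ha] at hsh'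
    rcases hsh' with ⟨h1, -⟩ | ⟨a', b', h1, h2, h3⟩
    · simp at h1
    · cases Option.some.inj h1
      cases Option.some.inj h2
      exact hf.2 c a h3

lemma resZ_extZ (z : Fin n) (σ' : Setoid ({i : Fin n // i ≠ z} × ZMod m)) :
    resZ (extZ z σ') z = σ' := by
  apply Setoid.ext
  intro a b
  show (optS σ').r (phiZ z (iota z a)) (phiZ z (iota z b)) ↔ σ'.r a b
  rw [phi_iota, phi_iota]
  constructor
  · rintro (⟨h1, -⟩ | ⟨a', b', h1, h2, h3⟩)
    · simp at h1
    · cases Option.some.inj h1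
      cases Option.some.inj h2
      exact h3
  · intro h
    exact Or.inr ⟨a, b, rfl, rfl, h⟩

lemma extZ_resZ {σ : Setoid (ColoredSet m n)} {z : Fin n} (hz : Hz σ z) :
    extZ z (resZ σ z) = σ := by
  apply Setoid.ext
  intro x y
  constructor
  · rintro (⟨h1, h2⟩ | ⟨a, b, h1, h2, h3⟩)
    · have hx : σ.r x none := (hz x).mpr ((phi_none_iff z x).mp h1)
      have hy : σ.r y none := (hz y).mpr ((phi_none_iff z y).mp h2)
      exact σ.trans hx (σ.symm hy)
    · rw [phi_some h1, phi_some h2]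
      exact h3
  · intro h
    by_cases hx0 : σ.r x none
    · have hy0 : σ.r y none := σ.trans (σ.symm h) hx0
      exact Or.inl ⟨(phi_none_iff z x).mpr ((hz x).mp hx0),
        (phi_none_iff z y).mpr ((hz y).mp hy0)⟩
    · have hy0 : ¬ σ.r y none := fun hy => hx0 (σ.trans h hy)
      have hxn : phiZ z x ≠ none := fun hn => hx0 ((hz x).mpr ((phi_none_iff z x).mp hn))
      have hyn : phiZ z y ≠ none := fun hn => hy0 ((hz y).mpr ((phi_none_iff z y).mp hn))
      obtain ⟨a, ha⟩ := Option.ne_none_iff_exists'.mp hxn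
      obtain ⟨b, hb⟩ := Option.ne_none_iff_exists'.mp hyn
      refine Or.inr ⟨a, b, ha, hb, ?_⟩
      show σ.r (iota z a) (iota z b)
      rw [← phi_some ha, ← phi_some hb]
      exact h

end TopLevel

end Stmt5Aux

open Stmt5Aux

/-- for `m ≥ 1`, `n ≥ 1` and `0 ≤ k ≤ n−1`, the number of colored set
partitions of type `(m,n)` with exactly `km+1` blocks whose zero block has exactly
`m+1` elements equals `n·h_{n−k−1}(m, 2m, …, km)`. -/
theorem stmt5 (m n k : ℕ) (hm : 1 ≤ m) (hn : 1 ≤ n) (hk : k ≤ n - 1) :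
    Nat.card {σ : Setoid (ColoredSet m n) //
        IsColored σ ∧ Nat.card (Quotient σ) = k * m + 1 ∧
        Nat.card {x : ColoredSet m n // σ.r x none} = m + 1}
      = n * hpoly (n - k - 1) ((List.range k).map fun j => (j + 1) * m) := by
  haveI : NeZero m := ⟨by omega⟩
  classical
  set M := {σ : Setoid (ColoredSet m n) //
      IsColored σ ∧ Nat.card (Quotient σ) = k * m + 1 ∧
      Nat.card {x : ColoredSet m n // σ.r x none} = m + 1} with hM
  set G : M → Fin n := fun x => (exists_Hz x.2.1 x.2.2.2).choose with hGdef
  have hGz : ∀ x : M, Hz x.1 (G x) := fun x => (exists_Hz x.2.1 x.2.2.2).choose_spec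
  haveI : Finite M := by unfold M; infer_instance
  have hcardM : Nat.card M = ∑ z : Fin n, Nat.card {x : M // G x = z} := by
    rw [← Nat.card_congr (Equiv.sigmaFiberEquiv G), card_sigma']
  have hfiber : ∀ z : Fin n, Nat.card {x : M // G x = z}
      = Nat.card {σ' : Setoid ({i : Fin n // i ≠ z} × ZMod m) //
          Free m σ' ∧ Nat.card (Quotient σ') = k * m} := by
    intro z
    refine Nat.card_congr ⟨?_, ?_, ?_, ?_⟩
    · rintro ⟨⟨σ, hcol, hq, hz'⟩, hgz⟩
      have hz : Hz σ z := by rw [← hgz]; exact hGz ⟨σ, hcol, hq, hz'⟩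
      refine ⟨resZ σ z, free_resZ hcol hz, ?_⟩
      have := quot_resZ hz
      omega
    · rintro ⟨σ', hfree, hcard⟩
      refine ⟨⟨extZ z σ', isColored_extZ z hfree, ?_, ?_⟩, ?_⟩
      · rw [quot_resZ (Hz_extZ z σ'), resZ_extZ, hcard]
      · exact zblock_card (Hz_extZ z σ')
      · exact Hz_unique (hGz _) (Hz_extZ z σ')
    · rintro ⟨⟨σ, hcol, hq, hz'⟩, hgz⟩
      have hz : Hz σ z := by rw [← hgz]; exact hGz ⟨σ, hcol, hq, hz'⟩
      exact Subtype.ext (Subtype.ext (extZ_resZ hz))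
    · rintro ⟨σ', hfree, hcard⟩
      exact Subtype.ext (resZ_extZ z σ')
  have hcard_sub : ∀ z : Fin n,
      Nat.card {σ' : Setoid ({i : Fin n // i ≠ z} × ZMod m) //
          Free m σ' ∧ Nat.card (Quotient σ') = k * m} = cnt m (n - 1) k := by
    intro z
    have e : {i : Fin n // i ≠ z} ≃ Fin (n - 1) := by
      apply Fintype.equivFinOfCardEq
      rw [Fintype.card_subtype_compl, Fintype.card_subtype_eq, Fintype.card_fin]
    simp only [cnt]
    exact cnt_congr (k * m) e
  rw [hcardM, Finset.sum_congr rfl (fun z _ => (hfiber z).trans (hcard_sub z)),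
    Finset.sum_const, Finset.card_univ, Fintype.card_fin, smul_eq_mul,
    cnt_eq_hpoly hk]
  have he : n - 1 - k = n - k - 1 := by omega
  rw [he]
end

section
/- Let R be a commutative ring, let n ≥ 0, and let t, x_1, …, x_{n+1} ∈ R. Then t^n = Σ_{k=0}^{n} h_{n−k}(x_1, …, x_{k+1}) · Π_{i=1}^{k} (t − x_i). -/
open Finset

lemma hpoly_append {R : Type*} [CommRing R] : ∀ (j : ℕ) (l : List R) (a : R),
    hpoly (j + 1) (l ++ [a]) = hpoly (j + 1) l + a * hpoly j (l ++ [a]) := by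
  intro j
  induction j with
  | zero =>
    intro l a
    induction l with
    | nil => simp [hpoly]
    | cons b l ih => simp only [List.cons_append, hpoly] at *; rw [ih]; ring
  | succ j ihj =>
    intro l a
    induction l with
    | nil => simp [hpoly]
    | cons b l ihl =>
      have h1 := ihj (b :: l) a
      simp only [List.cons_append, hpoly] at *
      linear_combination ihl + b * h1


/-- for any commutative ring `R`, `t ∈ R` and elements
`x 0, …, x n` of `R` (playing the role of `x_1, …, x_{n+1}`),
`t^n = Σ_{k=0}^{n} h_{n−k}(x_1, …, x_{k+1}) · Π_{i=1}^{k} (t − x_i)`. -/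
theorem stmt6 (R : Type*) [CommRing R] (n : ℕ) (t : R) (x : ℕ → R) :
    t ^ n =
      ∑ k ∈ range (n + 1),
        hpoly (n - k) ((List.range (k + 1)).map x) * ∏ i ∈ range k, (t - x i) := by
  induction n with
  | zero => simp [hpoly]
  | succ n ih =>
    have key : ∀ k ∈ range (n + 1),
        hpoly (n + 1 - k) ((List.range (k + 1)).map x) * ∏ i ∈ range k, (t - x i)
          = hpoly (n + 1 - k) ((List.range k).map x) * ∏ i ∈ range k, (t - x i)
            + x k * (hpoly (n - k) ((List.range (k + 1)).map x) * ∏ i ∈ range k, (t - x i)) := by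
      intro k hk
      rw [mem_range, Nat.lt_succ_iff] at hk
      have hsub : n + 1 - k = (n - k) + 1 := by omega
      rw [hsub, List.range_succ, List.map_append, List.map_singleton, hpoly_append]
      ring
    have e1 : ∑ k ∈ range (n + 1 + 1),
          hpoly (n + 1 - k) ((List.range (k + 1)).map x) * ∏ i ∈ range k, (t - x i)
        = (∑ k ∈ range (n + 1),
            hpoly (n + 1 - k) ((List.range k).map x) * ∏ i ∈ range k, (t - x i))
          + (∑ k ∈ range (n + 1),
              x k * (hpoly (n - k) ((List.range (k + 1)).map x) * ∏ i ∈ range k, (t - x i)))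
          + ∏ i ∈ range (n + 1), (t - x i) := by
      rw [Finset.sum_range_succ, Finset.sum_congr rfl key, Finset.sum_add_distrib]
      simp [hpoly]
    have e2 : (∑ k ∈ range (n + 1),
            hpoly (n + 1 - k) ((List.range k).map x) * ∏ i ∈ range k, (t - x i))
          + ∏ i ∈ range (n + 1), (t - x i)
        = ∑ k ∈ range (n + 1),
            hpoly (n - k) ((List.range (k + 1)).map x) * ∏ i ∈ range (k + 1), (t - x i) := by
      rw [Finset.sum_range_succ', Finset.sum_range_succ]
      simp [hpoly]
    calc t ^ (n + 1)
        = ∑ k ∈ range (n + 1),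
            (hpoly (n - k) ((List.range (k + 1)).map x) * ∏ i ∈ range (k + 1), (t - x i)
              + x k * (hpoly (n - k) ((List.range (k + 1)).map x) * ∏ i ∈ range k, (t - x i))) := by
          rw [pow_succ, ih, Finset.sum_mul]
          exact Finset.sum_congr rfl fun k hk => by rw [Finset.prod_range_succ]; ring
      _ = _ := by rw [Finset.sum_add_distrib, e1, ← e2]; ring
end

section
/- For all integers m ≥ 2 and 0 ≤ k ≤ n, the following identity holds in ℤ[q]: Σ_{i=0}^{n−k} binom(n,i) · (q·[m]_q)^{n−k−i} · h_{(n−i)−k}([1]_{q^m}, [2]_{q^m}, …, [k]_{q^m}) = h_{n−k}([1]_q, [m+1]_q, [2m+1]_q, …, [km+1]_q), where [l]_{q^m} denotes the q-integer [l] with q replaced by q^m. -/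
open Finset

/-- The q-integer `[l]_q = 1 + q + … + q^{l-1}` in `ℤ[q]`. -/
noncomputable def qint (l : ℕ) : Polynomial ℤ := ∑ i ∈ range l, Polynomial.X ^ i

/-- The q-integer `[l]` with `q` replaced by `q^m`, i.e. `[l]_{q^m} = Σ_{i<l} q^{m·i}`. -/
noncomputable def qintPow (l e : ℕ) : Polynomial ℤ := ∑ i ∈ range l, Polynomial.X ^ (e * i)

lemma hpoly_zero {R : Type*} [CommSemiring R] (l : List R) : hpoly 0 l = 1 := by
  simp [hpoly]

lemma hpoly_cons {R : Type*} [CommSemiring R] (j : ℕ) (a : R) (l : List R) :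
    hpoly (j+1) (a :: l) = hpoly (j+1) l + a * hpoly j (a :: l) := by
  rw [hpoly]

lemma hpoly_nil {R : Type*} [CommSemiring R] (j : ℕ) :
    hpoly j ([] : List R) = if j = 0 then 1 else 0 := by
  cases j <;> simp [hpoly]

lemma hpoly_zero_cons {R : Type*} [CommSemiring R] (j : ℕ) (l : List R) :
    hpoly j ((0:R) :: l) = hpoly j l := by
  cases j with
  | zero => simp [hpoly]
  | succ j => rw [hpoly_cons]; simp

lemma hpoly_smul {R : Type*} [CommSemiring R] (x : R) : ∀ (l : List R) (j : ℕ),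
    hpoly j (l.map (x * ·)) = x ^ j * hpoly j l := by
  intro l
  induction l with
  | nil => intro j; cases j <;> simp [hpoly]
  | cons a l ih =>
    intro j
    induction j with
    | zero => simp [hpoly]
    | succ j ihj =>
      simp only [List.map_cons] at ihj ⊢
      rw [hpoly_cons, hpoly_cons, ih, ihj]
      ring

lemma hpoly_one_add {R : Type*} [CommRing R] : ∀ (l : List R) (d : ℕ),
    hpoly d (l.map (fun c => 1 + c)) =
      ∑ i ∈ range (d+1), ((d + l.length - 1).choose i : R) * hpoly (d - i) l := by
  intro l
  induction l with
  | nil =>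
    intro d
    cases d with
    | zero => simp [hpoly]
    | succ d =>
      rw [List.map_nil, hpoly_nil]
      simp only [List.length_nil, Nat.add_zero, Nat.add_sub_cancel]
      rw [eq_comm, if_neg (by omega), Finset.sum_eq_zero]
      intro i hi
      simp only [Finset.mem_range] at hi
      rcases eq_or_ne (d + 1 - i) 0 with h | h
      · have : i = d + 1 := by omega
        subst this
        simp [Nat.choose_succ_self]
      · rw [hpoly_nil, if_neg h, mul_zero]
  | cons a l ih =>
    intro d
    induction d with
    | zero => simp [hpoly]
    | succ d ihd =>
      have hg : ∀ j, a * hpoly j (a :: l) = hpoly (j+1) (a :: l) - hpoly (j+1) l := by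
        intro j; rw [hpoly_cons]; ring
      rw [List.map_cons, hpoly_cons, ih (d+1)]
      simp only [List.map_cons] at ihd
      rw [ihd]
      simp only [List.length_cons]
      have e1 : d + 1 + l.length - 1 = d + l.length := by omega
      have e2 : d + (l.length + 1) - 1 = d + l.length := by omega
      have e3 : d + 1 + (l.length + 1) - 1 = d + l.length + 1 := by omega
      rw [e1, e2, e3]
      set N := d + l.length with hN
      -- goal:
      -- Σ_{i∈range(d+2)} C(N,i) h_{d+1-i}(l) + (1+a) Σ_{i∈range(d+1)} C(N,i) h_{d-i}(a::l)
      --   = Σ_{i∈range(d+2)} C(N+1,i) h_{d+1-i}(a::l)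
      rw [Finset.sum_range_succ' (fun i => ((N+1).choose i : R) * hpoly (d+1-i) (a::l))]
      rw [Finset.sum_range_succ' (fun i => ((N).choose i : R) * hpoly (d+1-i) l)]
      simp only [Nat.choose_zero_right, Nat.cast_one, one_mul, Nat.sub_zero,
        Nat.succ_sub_succ_eq_sub, Nat.choose_succ_succ, Nat.cast_add]
      -- now rearrange
      have key : ∑ i ∈ range (d+1), ((N).choose i : R) * (a * hpoly (d-i) (a::l))
          = (∑ i ∈ range (d+1), ((N).choose (i+1) : R) *
              (hpoly (d-i) (a::l) - hpoly (d-i) l))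
            + (hpoly (d+1) (a::l) - hpoly (d+1) l) := by
        have hG : ∀ i ∈ range (d+1), ((N).choose i : R) * (a * hpoly (d-i) (a::l))
            = (fun i => ((N).choose i : R) *
                (hpoly (d+1-i) (a::l) - hpoly (d+1-i) l)) i := by
          intro i hi
          simp only [Finset.mem_range] at hi
          have h1 : d + 1 - i = (d - i) + 1 := by omega
          dsimp only
          rw [h1, hg (d-i)]
        rw [Finset.sum_congr rfl hG]
        have heq := Finset.sum_range_succ
          (fun i => ((N).choose i : R) * (hpoly (d+1-i) (a::l) - hpoly (d+1-i) l)) (d+1)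
        rw [Finset.sum_range_succ' (fun i => ((N).choose i : R) *
            (hpoly (d+1-i) (a::l) - hpoly (d+1-i) l)) (d+1)] at heq
        simp only [Nat.choose_zero_right, Nat.cast_one, one_mul, Nat.sub_zero,
          Nat.succ_sub_succ_eq_sub] at heq
        have hlast : ((N).choose (d+1) : R) *
            (hpoly (d - d) (a::l) - hpoly (d - d) l) = 0 := by
          simp [Nat.sub_self, hpoly_zero]
        rw [hlast, add_zero] at heq
        linear_combination -heq
      calc ∑ i ∈ range (d+1), ((N).choose (i+1) : R) * hpoly (d-i) l + hpoly (d+1) l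
            + (1+a) * ∑ i ∈ range (d+1), ((N).choose i : R) * hpoly (d-i) (a :: l)
          = (∑ i ∈ range (d+1), ((N).choose (i+1) : R) * hpoly (d-i) l + hpoly (d+1) l
              + ∑ i ∈ range (d+1), ((N).choose i : R) * hpoly (d-i) (a :: l))
            + ∑ i ∈ range (d+1), ((N).choose i : R) * (a * hpoly (d-i) (a::l)) := by
            have hmul : (1+a) * ∑ i ∈ range (d+1), ((N).choose i : R) * hpoly (d-i) (a :: l)
                = (∑ i ∈ range (d+1), ((N).choose i : R) * hpoly (d-i) (a :: l))
                  + ∑ i ∈ range (d+1), ((N).choose i : R) * (a * hpoly (d-i) (a::l)) := by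
              rw [add_mul, one_mul, Finset.mul_sum]
              congr 1
              exact Finset.sum_congr rfl fun i _ => by ring
            rw [hmul]; ring
        _ = ∑ i ∈ range (d+1),
              (((N).choose i : R) + ((N).choose (i+1) : R)) * hpoly (d-i) (a :: l)
            + hpoly (d+1) (a :: l) := by
            rw [key]
            simp only [add_mul, mul_sub, Finset.sum_add_distrib, Finset.sum_sub_distrib]
            ring


lemma qint_add (a b : ℕ) : qint (a + b) = qint a + Polynomial.X ^ a * qint b := by
  unfold qint
  rw [Finset.sum_range_add, Finset.mul_sum]
  congr 1
  exact Finset.sum_congr rfl fun i _ => by rw [pow_add]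

lemma qint_mul_add_one (m j : ℕ) :
    qint (j * m + 1) = 1 + (Polynomial.X * qint m) * qintPow j m := by
  induction j with
  | zero => simp [qint, qintPow]
  | succ j ih =>
    have e : (j + 1) * m + 1 = (j * m + 1) + m := by ring
    rw [e, qint_add, ih]
    unfold qintPow
    rw [Finset.sum_range_succ]
    ring


/-- for `m ≥ 2` and `0 ≤ k ≤ n`, in `ℤ[q]`,
`Σ_{i=0}^{n−k} binom(n,i) · (q·[m]_q)^{n−k−i} · h_{(n−i)−k}([1]_{q^m}, …, [k]_{q^m})
  = h_{n−k}([1]_q, [m+1]_q, [2m+1]_q, …, [km+1]_q)`. -/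
theorem stmt10 (m n k : ℕ) (hm : 2 ≤ m) (hk : k ≤ n) :
    ∑ i ∈ range (n - k + 1),
        (n.choose i : Polynomial ℤ) * (Polynomial.X * qint m) ^ (n - k - i) *
          hpoly ((n - i) - k) ((List.range k).map fun j => qintPow (j + 1) m)
      = hpoly (n - k) ((List.range (k + 1)).map fun j => qint (j * m + 1)) := by
  set x : Polynomial ℤ := Polynomial.X * qint m with hx
  have step1 : ((List.range (k + 1)).map fun j => qint (j * m + 1))
      = ((List.range (k + 1)).map fun j => x * qintPow j m).map (fun c => 1 + c) := by
    rw [List.map_map]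
    exact List.map_congr_left fun j _ => qint_mul_add_one m j
  rw [step1, hpoly_one_add]
  simp only [List.length_map, List.length_range]
  have eN : n - k + (k + 1) - 1 = n := by omega
  rw [eN]
  refine Finset.sum_congr rfl fun i hi => ?_
  simp only [Finset.mem_range] at hi
  have e2 : (n - i) - k = (n - k) - i := by omega
  rw [e2, mul_assoc]
  congr 1
  have step2 : ((List.range (k + 1)).map fun j => x * qintPow j m)
      = ((List.range (k + 1)).map fun j => qintPow j m).map (x * ·) := by
    rw [List.map_map]; rfl
  rw [step2, hpoly_smul]
  congr 1
  have step3 : ((List.range (k + 1)).map fun j => qintPow j m)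
      = (0 : Polynomial ℤ) :: ((List.range k).map fun j => qintPow (j + 1) m) := by
    rw [List.range_succ_eq_map, List.map_cons, List.map_map]
    congr 1
  rw [step3, hpoly_zero_cons]
end

section
/- Fix integers m ≥ 2 and n ≥ 1. Let L̄(m,n) be the collection of all linear subspaces of ℂ^n that can be written as the intersection of a finite (possibly empty) family of hyperplanes from the set of hyperplanes {v ∈ ℂ^n : ζ v_i = v_j} for 1 ≤ i < j ≤ n and ζ an m-th root of unity (the empty intersection being ℂ^n itself), partially ordered by reverse inclusion. Then L̄(m,n) is order-isomorphic to the poset of colored set partitions of type (m̄,n) ordered by refinement (σ ≤ τ iff every block of σ is contained in a block of τ). Consequently, for every 0 ≤ k ≤ n, the number of subspaces in L̄(m,n) of dimension k equals S̄(m,n,k). -/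
open Finset

/-- A colored set partition of type `(m̄,n)`: a colored set partition of type `(m,n)`
whose zero block is not `{0} ∪ ({i} × ℤ/mℤ)` for any `i`. -/
def IsBarColored {m n : ℕ} (σ : Setoid (ColoredSet m n)) : Prop :=
  IsColored σ ∧
  ∀ i : Fin n,
    {x : ColoredSet m n | σ.r x none} ≠
      insert none {x : ColoredSet m n | ∃ c : ZMod m, x = some (i, c)}

/-- `S̄(m,n,k)`: the number of colored set partitions of type `(m̄,n)` with `km+1`
blocks. -/
noncomputable def SbarCount (m n k : ℕ) : ℕ :=
  Nat.card {σ : Setoid (ColoredSet m n) //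
    IsBarColored σ ∧ Nat.card (Quotient σ) = k * m + 1}

/-- The reflecting hyperplanes of `G(m,m,n)`: the hyperplanes `ζ X_i = X_j` for `i < j`
and `ζ^m = 1` (no coordinate hyperplanes). -/
def IsBarRefHyp (m n : ℕ) (H : Submodule ℂ (Fin n → ℂ)) : Prop :=
  ∃ (i j : Fin n) (ζ : ℂ), i < j ∧ ζ ^ m = 1 ∧
    H = LinearMap.ker
      (ζ • (LinearMap.proj i : (Fin n → ℂ) →ₗ[ℂ] ℂ) - LinearMap.proj j)

/-- The intersection lattice `L̄(m,n)`: all subspaces of `ℂ^n` that are intersections of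
finitely many (possibly zero) hyperplanes `ζ X_i = X_j`. -/
def BarInterLattice (m n : ℕ) : Set (Submodule ℂ (Fin n → ℂ)) :=
  {W | ∃ s : Finset (Submodule ℂ (Fin n → ℂ)),
    (∀ H ∈ s, IsBarRefHyp m n H) ∧ W = s.inf id}

namespace S16

variable {m n : ℕ}

/-! ### roots of unity -/

noncomputable def w (m : ℕ) : ℂ := Complex.exp (2 * Real.pi * Complex.I / m)

lemma w_prim (hm : 2 ≤ m) : IsPrimitiveRoot (w m) m :=
  Complex.isPrimitiveRoot_exp m (by omega)

lemma w_pow_m (hm : 2 ≤ m) : w m ^ m = 1 := (w_prim hm).pow_eq_one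

noncomputable def wc (m : ℕ) (c : ZMod m) : ℂ := w m ^ c.val

lemma w_ne_zero : w m ≠ 0 := Complex.exp_ne_zero _

lemma wc_ne_zero (c : ZMod m) : wc m c ≠ 0 := pow_ne_zero _ w_ne_zero

lemma wc_pow_m (hm : 2 ≤ m) (c : ZMod m) : wc m c ^ m = 1 := by
  rw [wc, ← pow_mul, mul_comm, pow_mul, w_pow_m hm, one_pow]

lemma wc_zero (hm : 2 ≤ m) : wc m 0 = 1 := by
  haveI : NeZero m := ⟨by omega⟩
  rw [wc, ZMod.val_zero, pow_zero]

lemma wc_add (hm : 2 ≤ m) (a b : ZMod m) : wc m (a + b) = wc m a * wc m b := by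
  haveI : NeZero m := ⟨by omega⟩
  rw [wc, wc, wc, ZMod.val_add, ← pow_add]
  conv_rhs => rw [← Nat.div_add_mod (a.val + b.val) m]
  rw [pow_add, pow_mul, w_pow_m hm, one_pow, one_mul]

lemma wc_eq_one_iff (hm : 2 ≤ m) {c : ZMod m} : wc m c = 1 ↔ c = 0 := by
  haveI : NeZero m := ⟨by omega⟩
  constructor
  · intro h
    have hdvd := ((w_prim hm).pow_eq_one_iff_dvd c.val).mp h
    have hlt := ZMod.val_lt c
    exact (ZMod.val_eq_zero c).mp (Nat.eq_zero_of_dvd_of_lt hdvd hlt)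
  · rintro rfl
    exact wc_zero hm

lemma wc_one_ne_one (hm : 2 ≤ m) : wc m (1 : ZMod m) ≠ 1 := by
  haveI : Fact (1 < m) := ⟨by omega⟩
  rw [Ne, wc_eq_one_iff hm]
  intro h
  have := congrArg ZMod.val h
  rw [ZMod.val_one, ZMod.val_zero] at this
  exact one_ne_zero this

lemma exists_wc (hm : 2 ≤ m) {ζ : ℂ} (hζ : ζ ^ m = 1) : ∃ c : ZMod m, wc m c = ζ := by
  haveI : NeZero m := ⟨by omega⟩
  obtain ⟨i, hi, hpow⟩ := (w_prim hm).eq_pow_of_pow_eq_one hζ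
  exact ⟨(i : ZMod m), by rw [wc, ZMod.val_natCast_of_lt hi, hpow]⟩

end S16

namespace S16

variable {m n : ℕ}

/-! ### shift basics -/

@[simp] lemma shift_none (c : ZMod m) : shift c (none : ColoredSet m n) = none := rfl

@[simp] lemma shift_some (c : ZMod m) (i : Fin n) (d : ZMod m) :
    shift c (some (i, d)) = some (i, d + c) := rfl

lemma shift_shift (c d : ZMod m) (x : ColoredSet m n) :
    shift c (shift d x) = shift (d + c) x := by
  cases x with
  | none => rfl
  | some p => simp [shift, add_assoc]

lemma shift_zero (x : ColoredSet m n) : shift 0 x = x := by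
  cases x with
  | none => rfl
  | some p => simp [shift]

/-! ### the linear functionals -/

noncomputable def phi (m n : ℕ) : ColoredSet m n → ((Fin n → ℂ) →ₗ[ℂ] ℂ)
  | none => 0
  | some p => wc m p.2 • LinearMap.proj p.1

@[simp] lemma phi_none (v : Fin n → ℂ) : phi m n none v = 0 := rfl

@[simp] lemma phi_some (i : Fin n) (c : ZMod m) (v : Fin n → ℂ) :
    phi m n (some (i, c)) v = wc m c * v i := rfl

lemma phi_shift (hm : 2 ≤ m) (c : ZMod m) (x : ColoredSet m n) :
    phi m n (shift c x) = wc m c • phi m n x := by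
  cases x with
  | none => show (0 : (Fin n → ℂ) →ₗ[ℂ] ℂ) = wc m c • 0; rw [smul_zero]
  | some p =>
    obtain ⟨i, d⟩ := p
    show wc m (d + c) • (LinearMap.proj i : (Fin n → ℂ) →ₗ[ℂ] ℂ)
      = wc m c • (wc m d • LinearMap.proj i)
    rw [smul_smul, ← wc_add hm, add_comm c d]

/-! ### the subspace attached to a setoid, and the setoid attached to a subspace -/

noncomputable def Vsub (σ : Setoid (ColoredSet m n)) : Submodule ℂ (Fin n → ℂ) where
  carrier := {v | ∀ x y, σ.r x y → phi m n x v = phi m n y v}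
  add_mem' := fun ha hb x y h => by rw [map_add, map_add, ha x y h, hb x y h]
  zero_mem' := fun x y h => by rw [map_zero, map_zero]
  smul_mem' := fun a v hv x y h => by rw [map_smul, map_smul, hv x y h]

lemma mem_Vsub {σ : Setoid (ColoredSet m n)} {v : Fin n → ℂ} :
    v ∈ Vsub σ ↔ ∀ x y, σ.r x y → phi m n x v = phi m n y v := Iff.rfl

def SetoidOf (m : ℕ) {n : ℕ} (W : Submodule ℂ (Fin n → ℂ)) : Setoid (ColoredSet m n) :=
  ⟨fun x y => ∀ v ∈ W, phi m n x v = phi m n y v,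
   ⟨fun x v _ => rfl, fun h v hv => (h v hv).symm,
    fun h1 h2 v hv => (h1 v hv).trans (h2 v hv)⟩⟩

lemma SetoidOf_r {W : Submodule ℂ (Fin n → ℂ)} {x y : ColoredSet m n} :
    (SetoidOf m W).r x y ↔ ∀ v ∈ W, phi m n x v = phi m n y v := Iff.rfl

/-! ### colored setoid basics -/

lemma rel_none_shift {σ : Setoid (ColoredSet m n)} (hσ : IsColored σ) {x : ColoredSet m n}
    (h : σ.r x none) (c : ZMod m) : σ.r (shift c x) none := by
  have := hσ.1 c x none h
  rwa [shift_none] at this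

lemma rel_none_of_shift {σ : Setoid (ColoredSet m n)} (hσ : IsColored σ) {x : ColoredSet m n}
    {c : ZMod m} (h : σ.r (shift c x) none) : σ.r x none := by
  have h2 := rel_none_shift hσ h (-c)
  rwa [shift_shift, add_neg_cancel, shift_zero] at h2

lemma unique_color {σ : Setoid (ColoredSet m n)} (hσ : IsColored σ) {z : ColoredSet m n}
    (hz : ¬ σ.r z none) {j : Fin n} {c c' : ZMod m}
    (h1 : σ.r (some (j, c)) z) (h2 : σ.r (some (j, c')) z) : c = c' := by
  have hnz : ¬ σ.r (some (j, c)) none := fun h => hz (σ.iseqv.trans (σ.iseqv.symm h1) h)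
  have hs : σ.r (shift (c' - c) (some (j, c))) (some (j, c)) := by
    rw [shift_some, show c + (c' - c) = c' from by ring]
    exact σ.iseqv.trans h2 (σ.iseqv.symm h1)
  have h0 := hσ.2 _ _ hnz hs
  have := sub_eq_zero.mp h0
  exact this.symm

/-! ### the block vectors -/

open scoped Classical in
noncomputable def vB (σ : Setoid (ColoredSet m n)) (z : ColoredSet m n) : Fin n → ℂ :=
  fun j => if h : ∃ c : ZMod m, σ.r (some (j, c)) z then wc m (-h.choose) else 0

lemma vB_spec {σ : Setoid (ColoredSet m n)} (hσ : IsColored σ) {z : ColoredSet m n}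
    (hz : ¬ σ.r z none) {j : Fin n} {c : ZMod m}
    (h : σ.r (some (j, c)) z) : vB σ z j = wc m (-c) := by
  have hex : ∃ c : ZMod m, σ.r (some (j, c)) z := ⟨c, h⟩
  have h1 : vB σ z j = wc m (-hex.choose) := by
    unfold vB
    exact dif_pos hex
  rw [h1, unique_color hσ hz hex.choose_spec h]

lemma vB_zero {σ : Setoid (ColoredSet m n)} {z : ColoredSet m n} {j : Fin n}
    (h : ∀ c : ZMod m, ¬ σ.r (some (j, c)) z) : vB σ z j = 0 := by
  have hne : ¬ ∃ c : ZMod m, σ.r (some (j, c)) z := fun hex => h _ hex.choose_spec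
  unfold vB
  exact dif_neg hne

lemma phi_vB_rel (hm : 2 ≤ m) {σ : Setoid (ColoredSet m n)} (hσ : IsColored σ)
    {z : ColoredSet m n} (hz : ¬ σ.r z none) {x : ColoredSet m n} {c : ZMod m}
    (h : σ.r x (shift c z)) : phi m n x (vB σ z) = wc m c := by
  cases x with
  | none =>
    exact absurd (rel_none_of_shift hσ (σ.iseqv.symm h)) hz
  | some p =>
    obtain ⟨i, d⟩ := p
    have h2 : σ.r (shift (-c) (some (i, d))) z := by
      have := hσ.1 (-c) _ _ h
      rwa [shift_shift, add_neg_cancel, shift_zero] at this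
    rw [shift_some] at h2
    rw [phi_some, vB_spec hσ hz h2, ← wc_add hm]
    congr 1
    ring

lemma phi_vB_nrel {σ : Setoid (ColoredSet m n)} (hσ : IsColored σ)
    {z : ColoredSet m n} {x : ColoredSet m n}
    (h : ∀ c : ZMod m, ¬ σ.r x (shift c z)) : phi m n x (vB σ z) = 0 := by
  cases x with
  | none => exact phi_none _
  | some p =>
    obtain ⟨i, d⟩ := p
    have hz0 : ∀ c : ZMod m, ¬ σ.r (some (i, c)) z := by
      intro c hc
      apply h (d - c)
      have := hσ.1 (d - c) _ _ hc
      rw [shift_some, show c + (d - c) = d from by ring] at this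
      exact this
    rw [phi_some, vB_zero hz0, mul_zero]

lemma vB_prop (hm : 2 ≤ m) {σ : Setoid (ColoredSet m n)} (hσ : IsColored σ)
    {z : ColoredSet m n} (hz : ¬ σ.r z none) :
    ∀ x y, σ.r x y → phi m n x (vB σ z) = phi m n y (vB σ z) := by
  intro x y hxy
  by_cases hex : ∃ c : ZMod m, σ.r x (shift c z)
  · obtain ⟨c, hc⟩ := hex
    exact (phi_vB_rel hm hσ hz hc).trans
      (phi_vB_rel hm hσ hz (σ.iseqv.trans (σ.iseqv.symm hxy) hc)).symm
  · push_neg at hex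
    have hy : ∀ c : ZMod m, ¬ σ.r y (shift c z) := fun c hc => hex c (σ.iseqv.trans hxy hc)
    exact (phi_vB_nrel hσ hex).trans (phi_vB_nrel hσ hy).symm

lemma vB_mem (hm : 2 ≤ m) {σ : Setoid (ColoredSet m n)} (hσ : IsColored σ)
    {z : ColoredSet m n} (hz : ¬ σ.r z none) : vB σ z ∈ Vsub σ :=
  mem_Vsub.mpr (vB_prop hm hσ hz)

lemma separation (hm : 2 ≤ m) {σ : Setoid (ColoredSet m n)} (hσ : IsColored σ)
    {x y : ColoredSet m n} (h : ¬ σ.r x y) :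
    ∃ v ∈ Vsub σ, phi m n x v ≠ phi m n y v := by
  by_cases hx : σ.r x none
  · have hy : ¬ σ.r y none := fun hy => h (σ.iseqv.trans hx (σ.iseqv.symm hy))
    refine ⟨vB σ y, vB_mem hm hσ hy, ?_⟩
    have h1 : phi m n y (vB σ y) = wc m 0 :=
      phi_vB_rel hm hσ hy (by rw [shift_zero])
    have h2 : phi m n x (vB σ y) = 0 := by
      rw [vB_prop hm hσ hy x none hx, phi_none]
    rw [h1, h2, wc_zero hm]
    exact zero_ne_one
  · refine ⟨vB σ x, vB_mem hm hσ hx, ?_⟩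
    have h1 : phi m n x (vB σ x) = wc m 0 :=
      phi_vB_rel hm hσ hx (by rw [shift_zero])
    rw [h1, wc_zero hm]
    by_cases hey : ∃ c : ZMod m, σ.r y (shift c x)
    · obtain ⟨c, hc⟩ := hey
      rw [phi_vB_rel hm hσ hx hc]
      intro h1c
      have hc0 : c = 0 := (wc_eq_one_iff hm).mp h1c.symm
      rw [hc0, shift_zero] at hc
      exact h (σ.iseqv.symm hc)
    · push_neg at hey
      rw [phi_vB_nrel hσ hey]
      exact one_ne_zero

end S16

namespace S16

variable {m n : ℕ}

/-! ### hyperplane membership -/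

lemma mem_hyp {ζ : ℂ} {i j : Fin n} {v : Fin n → ℂ} :
    v ∈ LinearMap.ker (ζ • (LinearMap.proj i : (Fin n → ℂ) →ₗ[ℂ] ℂ) - LinearMap.proj j) ↔
      ζ * v i = v j := by
  rw [LinearMap.mem_ker, LinearMap.sub_apply, LinearMap.smul_apply, LinearMap.proj_apply,
    LinearMap.proj_apply, smul_eq_mul, sub_eq_zero]

/-! ### `SetoidOf m W` is colored -/

lemma colored_SetoidOf (hm : 2 ≤ m) (W : Submodule ℂ (Fin n → ℂ)) :
    IsColored (SetoidOf m W) := by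
  constructor
  · intro c x y hxy v hv
    rw [phi_shift hm, phi_shift hm, LinearMap.smul_apply, LinearMap.smul_apply, hxy v hv]
  · intro c x hx hcx
    have hex : ∃ v ∈ W, phi m n x v ≠ 0 := by
      by_contra hcon
      push_neg at hcon
      exact hx fun v hv => by rw [hcon v hv, phi_none]
    obtain ⟨v, hv, hne⟩ := hex
    have h1 := hcx v hv
    rw [phi_shift hm, LinearMap.smul_apply, smul_eq_mul] at h1
    have h2 : wc m c = 1 := mul_right_cancel₀ hne (h1.trans (one_mul _).symm)
    exact (wc_eq_one_iff hm).mp h2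

/-! ### `Vsub (SetoidOf m W) = W` for `W` in the lattice -/

lemma Vsub_SetoidOf (hm : 2 ≤ m) {W : Submodule ℂ (Fin n → ℂ)}
    (hW : W ∈ BarInterLattice m n) : Vsub (SetoidOf m W) = W := by
  obtain ⟨s, hs, rfl⟩ := hW
  refine le_antisymm ?_ ?_
  · refine Finset.le_inf ?_
    intro H hH
    obtain ⟨i, j, ζ, hij, hζ, rfl⟩ := hs H hH
    obtain ⟨c, rfl⟩ := exists_wc hm hζ
    intro v hv
    have hrel : (SetoidOf m (s.inf id)).r (some (i, c)) (some (j, 0)) := by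
      intro u hu
      have huH : u ∈ LinearMap.ker
          (wc m c • (LinearMap.proj i : (Fin n → ℂ) →ₗ[ℂ] ℂ) - LinearMap.proj j) :=
        Submodule.mem_finsetInf.mp hu _ hH
      rw [phi_some, phi_some, wc_zero hm, one_mul, mem_hyp.mp huH]
    have h1 := mem_Vsub.mp hv _ _ hrel
    rw [phi_some, phi_some, wc_zero hm, one_mul] at h1
    show v ∈ LinearMap.ker
      (wc m c • (LinearMap.proj i : (Fin n → ℂ) →ₗ[ℂ] ℂ) - LinearMap.proj j)
    exact mem_hyp.mpr h1
  · intro v hv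
    exact mem_Vsub.mpr fun x y hxy => hxy v hv

/-! ### `SetoidOf m W` satisfies the bar condition -/

lemma bar_SetoidOf (hm : 2 ≤ m) {W : Submodule ℂ (Fin n → ℂ)}
    (hW : W ∈ BarInterLattice m n) : IsBarColored (SetoidOf m W) := by
  refine ⟨colored_SetoidOf hm W, ?_⟩
  intro i hbad
  have hzi : ∀ v ∈ W, v i = 0 := by
    intro v hv
    have hmem : (some (i, (0 : ZMod m)) : ColoredSet m n) ∈
        insert none {x : ColoredSet m n | ∃ c : ZMod m, x = some (i, c)} :=
      Set.mem_insert_iff.mpr (Or.inr ⟨0, rfl⟩)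
    rw [← hbad] at hmem
    have h1 := (hmem : (SetoidOf m W).r (some (i, 0)) none) v hv
    rwa [phi_some, phi_none, wc_zero hm, one_mul] at h1
  have hnzj : ∀ j : Fin n, j ≠ i → ∃ v ∈ W, v j ≠ 0 := by
    intro j hj
    have hnot : ¬ (SetoidOf m W).r (some (j, (0 : ZMod m))) none := by
      intro hrel
      have hmem : (some (j, (0 : ZMod m)) : ColoredSet m n) ∈
          {x : ColoredSet m n | (SetoidOf m W).r x none} := hrel
      rw [hbad] at hmem
      rcases Set.mem_insert_iff.mp hmem with h | ⟨c, hc⟩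
      · exact Option.some_ne_none _ h
      · simp only [Option.some.injEq, Prod.mk.injEq] at hc
        exact hj hc.1
    rw [SetoidOf_r] at hnot
    push_neg at hnot
    obtain ⟨v, hv, hne⟩ := hnot
    refine ⟨v, hv, fun h0 => hne ?_⟩
    rw [phi_some, phi_none, h0, mul_zero]
  obtain ⟨s, hs, rfl⟩ := hW
  classical
  set p : {j : Fin n // j ≠ i} → Subspace ℂ (s.inf id : Submodule ℂ (Fin n → ℂ)) := fun j =>
    LinearMap.ker ((LinearMap.proj j.1).comp (Submodule.subtype (s.inf id))) with hp
  have hne_top : ∀ j, p j ≠ ⊤ := by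
    intro j htop
    obtain ⟨v, hv, hvj⟩ := hnzj j.1 j.2
    have hmem : (⟨v, hv⟩ : (s.inf id : Submodule ℂ (Fin n → ℂ))) ∈ p j := by
      rw [htop]; exact Submodule.mem_top
    rw [hp, LinearMap.mem_ker, LinearMap.comp_apply] at hmem
    exact hvj hmem
  have hex_u : ∃ u : (s.inf id : Submodule ℂ (Fin n → ℂ)), ∀ j, u ∉ p j := by
    by_contra hcon
    push_neg at hcon
    have hcov : ⋃ j, ((p j : Subspace ℂ (s.inf id : Submodule ℂ (Fin n → ℂ))) :
        Set (s.inf id : Submodule ℂ (Fin n → ℂ))) = Set.univ := by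
      ext u
      simp only [Set.mem_iUnion, Set.mem_univ, iff_true, SetLike.mem_coe]
      exact hcon u
    obtain ⟨j, hj⟩ := Subspace.exists_eq_top_of_iUnion_eq_univ hcov
    exact hne_top j hj
  obtain ⟨u, hu⟩ := hex_u
  have hui : (u : Fin n → ℂ) i = 0 := hzi u u.2
  have huj : ∀ j : Fin n, j ≠ i → (u : Fin n → ℂ) j ≠ 0 := by
    intro j hj h0
    exact hu ⟨j, hj⟩ (by rw [hp, LinearMap.mem_ker, LinearMap.comp_apply]; exact h0)
  have hei : Pi.single i (1 : ℂ) ∈ s.inf id := by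
    rw [Submodule.mem_finsetInf]
    intro H hH
    obtain ⟨a, b, ζ, hab, hζ, rfl⟩ := hs H hH
    have huH : ζ * (u : Fin n → ℂ) a = (u : Fin n → ℂ) b :=
      mem_hyp.mp (Submodule.mem_finsetInf.mp u.2 _ hH)
    have hbne : b ≠ a := (hab.ne).symm
    have ha : a ≠ i := by
      rintro rfl
      have hb : b ≠ a := hbne
      apply huj b (fun hbi => hb (hbi.trans rfl))
      rw [← huH, hui, mul_zero]
    have hb : b ≠ i := by
      rintro rfl
      have hζne : ζ ≠ 0 := by
        intro h0
        rw [h0, zero_pow (by omega : m ≠ 0)] at hζ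
        exact zero_ne_one hζ
      apply huj a (fun hai => hbne (hai.symm ▸ rfl))
      ·
        have : ζ * (u : Fin n → ℂ) a = 0 := by rw [huH, hui]
        exact (mul_eq_zero.mp this).resolve_left hζne
    show Pi.single i (1 : ℂ) ∈ LinearMap.ker
      (ζ • (LinearMap.proj a : (Fin n → ℂ) →ₗ[ℂ] ℂ) - LinearMap.proj b)
    rw [mem_hyp, Pi.single_eq_of_ne ha, Pi.single_eq_of_ne hb, mul_zero]
  have := hzi _ hei
  rw [Pi.single_eq_same] at this
  exact one_ne_zero this

end S16

namespace S16

variable {m n : ℕ}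

/-! ### `Vsub σ` belongs to the lattice -/

lemma Vsub_mem_lattice (hm : 2 ≤ m) {σ : Setoid (ColoredSet m n)} (hσ : IsBarColored σ) :
    Vsub σ ∈ BarInterLattice m n := by
  classical
  haveI : NeZero m := ⟨by omega⟩
  refine ⟨Finset.image
      (fun p : (Fin n × ZMod m) × (Fin n × ZMod m) =>
        LinearMap.ker (wc m (p.1.2 - p.2.2) • (LinearMap.proj p.1.1 : (Fin n → ℂ) →ₗ[ℂ] ℂ) -
          LinearMap.proj p.2.1))
      (Finset.univ.filter fun p : (Fin n × ZMod m) × (Fin n × ZMod m) =>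
        p.1.1 < p.2.1 ∧ σ.r (some p.1) (some p.2)), ?_, ?_⟩
  · intro H hH
    simp only [Finset.mem_image, Finset.mem_filter] at hH
    obtain ⟨p, ⟨-, hlt, -⟩, rfl⟩ := hH
    exact ⟨p.1.1, p.2.1, wc m (p.1.2 - p.2.2), hlt, wc_pow_m hm _, rfl⟩
  · refine le_antisymm ?_ ?_
    · refine Finset.le_inf ?_
      intro H hH
      simp only [Finset.mem_image, Finset.mem_filter] at hH
      obtain ⟨p, ⟨-, hlt, hrel⟩, rfl⟩ := hH
      obtain ⟨⟨i, c⟩, ⟨j, d⟩⟩ := p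
      intro v hv
      have h1 : wc m c * v i = wc m d * v j := by
        have := mem_Vsub.mp hv _ _ hrel
        rwa [phi_some, phi_some] at this
      show v ∈ LinearMap.ker
        (wc m (c - d) • (LinearMap.proj i : (Fin n → ℂ) →ₗ[ℂ] ℂ) - LinearMap.proj j)
      rw [mem_hyp]
      have h2 : wc m (c - d) = wc m (-d) * wc m c := by
        rw [← wc_add hm]; congr 1; ring
      have h3 : wc m (-d) * wc m d = 1 := by
        rw [← wc_add hm, neg_add_cancel, wc_zero hm]
      calc wc m (c - d) * v i = wc m (-d) * (wc m c * v i) := by rw [h2]; ring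
        _ = wc m (-d) * (wc m d * v j) := by rw [h1]
        _ = v j := by rw [← mul_assoc, h3, one_mul]
    · intro v hv
      have hv' := Submodule.mem_finsetInf.mp hv
      have key : ∀ (i j : Fin n) (c d : ZMod m), i ≠ j → σ.r (some (i, c)) (some (j, d)) →
          wc m (c - d) * v i = v j := by
        intro i j c d hij hrel
        rcases lt_or_gt_of_ne hij with hlt | hgt
        · have hmem : v ∈ LinearMap.ker
              (wc m (c - d) • (LinearMap.proj i : (Fin n → ℂ) →ₗ[ℂ] ℂ) - LinearMap.proj j) := by
            refine hv' _ (Finset.mem_image.mpr ⟨((i, c), (j, d)), ?_, rfl⟩)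
            exact Finset.mem_filter.mpr ⟨Finset.mem_univ _, hlt, hrel⟩
          exact mem_hyp.mp hmem
        · have hmem : v ∈ LinearMap.ker
              (wc m (d - c) • (LinearMap.proj j : (Fin n → ℂ) →ₗ[ℂ] ℂ) - LinearMap.proj i) := by
            refine hv' _ (Finset.mem_image.mpr ⟨((j, d), (i, c)), ?_, rfl⟩)
            exact Finset.mem_filter.mpr ⟨Finset.mem_univ _, hgt, σ.iseqv.symm hrel⟩
          have h1 : wc m (d - c) * v j = v i := mem_hyp.mp hmem
          rw [← h1, ← mul_assoc, ← wc_add hm, show c - d + (d - c) = (0 : ZMod m) from by ring,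
            wc_zero hm, one_mul]
      have zero_coord : ∀ (i : Fin n) (c : ZMod m), σ.r (some (i, c)) none → v i = 0 := by
        intro i c hrel
        have hsub : insert none {x : ColoredSet m n | ∃ c : ZMod m, x = some (i, c)} ⊆
            {x : ColoredSet m n | σ.r x none} := by
          intro x hx
          rcases Set.mem_insert_iff.mp hx with rfl | ⟨c', rfl⟩
          · exact σ.iseqv.refl none
          · have h1 := rel_none_shift hσ.1 hrel (c' - c)
            rw [shift_some, show c + (c' - c) = c' from by ring] at h1
            exact h1
        have hex : ∃ x, σ.r x none ∧
            x ∉ insert none {x : ColoredSet m n | ∃ c : ZMod m, x = some (i, c)} := by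
          by_contra hcon
          push_neg at hcon
          exact hσ.2 i (Set.Subset.antisymm (fun x hx => hcon x hx) hsub)
        obtain ⟨x, hxz, hxnot⟩ := hex
        cases x with
        | none => exact absurd (Set.mem_insert _ _) hxnot
        | some q =>
          obtain ⟨j, d⟩ := q
          have hji : j ≠ i := by
            rintro rfl
            exact hxnot (Set.mem_insert_iff.mpr (Or.inr ⟨d, rfl⟩))
          have hr1 : σ.r (some (i, c)) (some (j, d)) := σ.iseqv.trans hrel (σ.iseqv.symm hxz)
          have hr2 : σ.r (some (i, c + 1)) (some (j, d)) := by
            have h1 := rel_none_shift hσ.1 hrel 1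
            rw [shift_some] at h1
            exact σ.iseqv.trans h1 (σ.iseqv.symm hxz)
          have k1 := key i j c d (Ne.symm hji) hr1
          have k2 := key i j (c + 1) d (Ne.symm hji) hr2
          have heq : wc m (c - d) * (wc m 1 - 1) * v i = 0 := by
            have h4 : wc m (c + 1 - d) = wc m (c - d) * wc m 1 := by
              rw [← wc_add hm]; congr 1; ring
            calc wc m (c - d) * (wc m 1 - 1) * v i
                = wc m (c + 1 - d) * v i - wc m (c - d) * v i := by rw [h4]; ring
              _ = v j - v j := by rw [k1, k2]
              _ = 0 := sub_self _
          have h1ne : wc m (1 : ZMod m) - 1 ≠ 0 := sub_ne_zero.mpr (wc_one_ne_one hm)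
          rcases mul_eq_zero.mp heq with h | h
          · rcases mul_eq_zero.mp h with h' | h'
            · exact absurd h' (wc_ne_zero _)
            · exact absurd h' h1ne
          · exact h
      refine mem_Vsub.mpr ?_
      intro x y hxy
      cases x with
      | none =>
        cases y with
        | none => rfl
        | some q =>
          obtain ⟨j, d⟩ := q
          rw [phi_none, phi_some, zero_coord j d (σ.iseqv.symm hxy), mul_zero]
      | some p =>
        obtain ⟨i, c⟩ := p
        cases y with
        | none => rw [phi_none, phi_some, zero_coord i c hxy, mul_zero]
        | some q =>
          obtain ⟨j, d⟩ := q
          by_cases hij : i = j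
          · subst hij
            by_cases hcd : c = d
            · subst hcd; rfl
            · have hnone : σ.r (some (i, c)) none := by
                by_contra hnn
                apply hcd
                have hs2 : σ.r (shift (d - c) (some (i, c))) (some (i, c)) := by
                  rw [shift_some, show c + (d - c) = d from by ring]
                  exact σ.iseqv.symm hxy
                have h0 := hσ.1.2 _ _ hnn hs2
                exact (sub_eq_zero.mp h0).symm
              have hnone2 : σ.r (some (i, d)) none :=
                σ.iseqv.trans (σ.iseqv.symm hxy) hnone
              rw [phi_some, phi_some, zero_coord i c hnone, mul_zero, mul_zero]
          · have k := key i j c d hij hxy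
            rw [phi_some, phi_some, ← k, ← mul_assoc, ← wc_add hm,
              show d + (c - d) = c from by ring]

/-! ### `SetoidOf m (Vsub σ) = σ` -/

lemma SetoidOf_Vsub (hm : 2 ≤ m) {σ : Setoid (ColoredSet m n)} (hσ : IsColored σ) :
    SetoidOf m (Vsub σ) = σ := by
  apply Setoid.ext
  intro x y
  constructor
  · intro h
    by_contra hne
    obtain ⟨v, hv, hvne⟩ := separation hm hσ hne
    exact hvne (h v hv)
  · intro h v hv
    exact mem_Vsub.mp hv x y h

end S16

namespace S16

variable {m n : ℕ}

lemma card_blocks (hm : 2 ≤ m) {σ : Setoid (ColoredSet m n)} (hσ : IsBarColored σ) :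
    Nat.card (Quotient σ) = m * Module.finrank ℂ (Vsub σ) + 1 := by
  classical
  haveI : NeZero m := ⟨by omega⟩
  -- the shift action on the quotient
  let act : ZMod m → Quotient σ → Quotient σ := fun c =>
    Quotient.lift (fun x => Quotient.mk σ (shift c x))
      (fun a b h => Quotient.sound (hσ.1.1 c a b h))
  have act_mk : ∀ (c : ZMod m) (x : ColoredSet m n),
      act c (Quotient.mk σ x) = Quotient.mk σ (shift c x) := fun _ _ => rfl
  have act_act : ∀ (c d : ZMod m) (q : Quotient σ), act c (act d q) = act (d + c) q := by
    intro c d q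
    induction q using Quotient.ind
    rename_i x
    rw [act_mk, act_mk, act_mk, shift_shift]
  have act_zero : ∀ q : Quotient σ, act 0 q = q := by
    intro q
    induction q using Quotient.ind
    rename_i x
    rw [act_mk, shift_zero]
  have act_none_iff : ∀ (c : ZMod m) (q : Quotient σ),
      act c q = Quotient.mk σ none ↔ q = Quotient.mk σ none := by
    intro c q
    induction q using Quotient.ind
    rename_i x
    rw [act_mk]
    constructor
    · intro h
      exact Quotient.sound (rel_none_of_shift hσ.1 (Quotient.exact h))
    · intro h
      exact Quotient.sound (rel_none_shift hσ.1 (Quotient.exact h) c)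
  have act_free : ∀ (c : ZMod m) (q : Quotient σ),
      q ≠ Quotient.mk σ none → act c q = q → c = 0 := by
    intro c q
    induction q using Quotient.ind
    rename_i x
    intro hq h
    refine hσ.1.2 c x (fun hxn => hq (Quotient.sound hxn)) ?_
    rw [act_mk] at h
    exact Quotient.exact h
  -- the free part
  let N := {q : Quotient σ // ¬ q = Quotient.mk σ none}
  let actN : ZMod m → N → N := fun c q =>
    ⟨act c q.1, fun h => q.2 ((act_none_iff c q.1).mp h)⟩
  have actN_actN : ∀ (c d : ZMod m) (q : N), actN c (actN d q) = actN (d + c) q :=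
    fun c d q => Subtype.ext (act_act c d q.1)
  have actN_zero : ∀ q : N, actN 0 q = q := fun q => Subtype.ext (act_zero q.1)
  have hre : Equivalence (fun q q' : N => ∃ c : ZMod m, actN c q = q') := by
    refine ⟨fun q => ⟨0, actN_zero q⟩, ?_, ?_⟩
    · rintro q q' ⟨c, rfl⟩
      exact ⟨-c, by rw [actN_actN, add_neg_cancel, actN_zero]⟩
    · rintro q q' q'' ⟨c, rfl⟩ ⟨d, rfl⟩
      exact ⟨c + d, (actN_actN d c q).symm⟩
  let OS : Setoid N := ⟨fun q q' => ∃ c : ZMod m, actN c q = q', hre⟩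
  haveI : Finite (Quotient σ) := Quotient.finite σ
  haveI : Finite N := Subtype.finite
  haveI : Finite (Quotient OS) := Quotient.finite OS
  haveI fO : Fintype (Quotient OS) := Fintype.ofFinite _
  -- representatives
  let repN : Quotient OS → N := Quotient.out
  have rep_mk : ∀ o : Quotient OS, Quotient.mk OS (repN o) = o := fun o => Quotient.out_eq o
  let z : Quotient OS → ColoredSet m n := fun o => (repN o).1.out
  have hz_mk : ∀ o, Quotient.mk σ (z o) = (repN o).1 := fun o => Quotient.out_eq _
  have hz : ∀ o, ¬ σ.r (z o) none := by
    intro o h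
    exact (repN o).2 ((hz_mk o) ▸ Quotient.sound h)
  let b : Quotient OS → (Fin n → ℂ) := fun o => vB σ (z o)
  have orbit_unique : ∀ (o o' : Quotient OS) (c : ZMod m),
      σ.r (z o) (shift c (z o')) → o = o' := by
    intro o o' c h
    have h1 : actN c (repN o') = repN o := by
      apply Subtype.ext
      show act c (repN o').1 = (repN o).1
      rw [← hz_mk o', ← hz_mk o, act_mk]
      exact Quotient.sound (σ.iseqv.symm h)
    have h2 : Quotient.mk OS (repN o') = Quotient.mk OS (repN o) := Quotient.sound ⟨c, h1⟩
    rw [rep_mk, rep_mk] at h2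
    exact h2.symm
  have eval_same : ∀ o, phi m n (z o) (b o) = 1 := by
    intro o
    rw [phi_vB_rel hm hσ.1 (hz o) (c := 0) (by rw [shift_zero]), wc_zero hm]
  have eval_ne : ∀ o o', o ≠ o' → phi m n (z o) (b o') = 0 := by
    intro o o' hne
    refine phi_vB_nrel hσ.1 ?_
    intro c hc
    exact hne (orbit_unique o o' c hc)
  -- basis
  let BV : Quotient OS → (Vsub σ) := fun o => ⟨b o, vB_mem hm hσ.1 (hz o)⟩
  have hind : LinearIndependent ℂ BV := by
    rw [Fintype.linearIndependent_iff]
    intro g hg o₀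
    have hg' : (∑ o, g o • b o) = 0 := by
      have h1 := congrArg (Submodule.subtype (Vsub σ)) hg
      rw [map_sum, map_zero] at h1
      simpa using h1
    have h2 := congrArg (phi m n (z o₀)) hg'
    rw [map_sum, map_zero] at h2
    rw [Finset.sum_eq_single o₀
      (fun o _ ho => by rw [map_smul, smul_eq_mul, eval_ne o₀ o (Ne.symm ho), mul_zero])
      (fun h => absurd (Finset.mem_univ _) h)] at h2
    rw [map_smul, smul_eq_mul, eval_same o₀, mul_one] at h2
    exact h2
  have hspan : ∀ v ∈ Vsub σ, (∑ o, (phi m n (z o) v) • b o) = v := by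
    intro v hv
    funext j
    rw [Finset.sum_apply]
    by_cases hj : σ.r (some (j, (0 : ZMod m))) none
    · have hvj : v j = 0 := by
        have h1 := mem_Vsub.mp hv _ _ hj
        rwa [phi_some, phi_none, wc_zero hm, one_mul] at h1
      have hbo : ∀ o, b o j = 0 := by
        intro o
        refine vB_zero ?_
        intro c hc
        apply hz o
        have hjc : σ.r (some (j, c)) none := by
          have h1 := rel_none_shift hσ.1 hj c
          rwa [shift_some, zero_add] at h1
        exact σ.iseqv.trans (σ.iseqv.symm hc) hjc
      rw [hvj]
      refine Finset.sum_eq_zero ?_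
      intro o _
      rw [Pi.smul_apply, hbo o, smul_zero]
    · have hqne : Quotient.mk σ (some (j, (0 : ZMod m))) ≠ Quotient.mk σ none :=
        fun h => hj (Quotient.exact h)
      set q : N := ⟨Quotient.mk σ (some (j, (0 : ZMod m))), hqne⟩ with hqdef
      set o₀ : Quotient OS := Quotient.mk OS q with ho₀
      have hex : ∃ c : ZMod m, actN c (repN o₀) = q := Quotient.exact (rep_mk o₀)
      obtain ⟨c₀, hc₀⟩ := hex
      have h1 : act c₀ ((repN o₀).1) = Quotient.mk σ (some (j, (0 : ZMod m))) :=
        congrArg Subtype.val hc₀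
      rw [← hz_mk o₀, act_mk] at h1
      have hrel : σ.r (some (j, (0 : ZMod m))) (shift c₀ (z o₀)) :=
        σ.iseqv.symm (Quotient.exact h1)
      have hbo : ∀ o, o ≠ o₀ → b o j = 0 := by
        intro o ho
        refine vB_zero ?_
        intro c hc
        apply ho
        have h2 : σ.r (some (j, (0 : ZMod m))) (shift (-c) (z o)) := by
          have h3 := hσ.1.1 (-c) _ _ hc
          rwa [shift_some, show c + -c = (0 : ZMod m) from add_neg_cancel c] at h3
        have h3 : σ.r (shift (-c₀) (some (j, (0 : ZMod m))))
            (shift (-c₀) (shift c₀ (z o₀))) := hσ.1.1 (-c₀) _ _ hrel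
        rw [shift_shift, add_neg_cancel, shift_zero] at h3
        have h4 := hσ.1.1 (-c₀) _ _ h2
        rw [shift_shift] at h4
        have h5 : σ.r (z o₀) (shift (-c + -c₀) (z o)) := σ.iseqv.trans (σ.iseqv.symm h3) h4
        exact (orbit_unique o₀ o _ h5).symm
      have hrel2 : σ.r (some (j, -c₀)) (z o₀) := by
        have h2 := hσ.1.1 (-c₀) _ _ hrel
        rwa [shift_shift, add_neg_cancel, shift_zero, shift_some, zero_add] at h2
      have hb0 : b o₀ j = wc m c₀ := by
        show vB σ (z o₀) j = wc m c₀
        rw [vB_spec hσ.1 (hz o₀) hrel2, neg_neg]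
      have hphi : phi m n (z o₀) v = wc m (-c₀) * v j := by
        have h2 := mem_Vsub.mp hv _ _ (σ.iseqv.symm hrel2)
        rwa [phi_some] at h2
      rw [Finset.sum_eq_single o₀
        (fun o _ ho => by rw [Pi.smul_apply, hbo o ho, smul_zero])
        (fun h => absurd (Finset.mem_univ _) h)]
      rw [Pi.smul_apply, hb0, hphi, smul_eq_mul]
      have h6 : wc m (-c₀) * wc m c₀ = 1 := by
        rw [← wc_add hm, neg_add_cancel, wc_zero hm]
      calc wc m (-c₀) * v j * wc m c₀ = (wc m (-c₀) * wc m c₀) * v j := by ring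
        _ = v j := by rw [h6, one_mul]
  have hsp : ⊤ ≤ Submodule.span ℂ (Set.range BV) := by
    rintro ⟨v, hv⟩ -
    rw [Submodule.mem_span_range_iff_exists_fun]
    refine ⟨fun o => phi m n (z o) v, ?_⟩
    apply Subtype.ext
    rw [AddSubmonoidClass.coe_finset_sum]
    simp only [SetLike.val_smul]
    exact hspan v hv
  let B : Module.Basis (Quotient OS) ℂ (Vsub σ) := Module.Basis.mk hind hsp
  have hrank : Module.finrank ℂ (Vsub σ) = Nat.card (Quotient OS) :=
    Module.finrank_eq_nat_card_basis B
  -- counting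
  have e1 : Nat.card (Quotient σ) = Nat.card N + 1 := by
    haveI : Unique {q : Quotient σ // q = Quotient.mk σ none} :=
      ⟨⟨⟨Quotient.mk σ none, rfl⟩⟩, by rintro ⟨q, rfl⟩; rfl⟩
    have h1 : Nat.card {q : Quotient σ // q = Quotient.mk σ none} = 1 := Nat.card_unique
    have hcongr := Nat.card_congr (Equiv.sumCompl (fun q : Quotient σ =>
      q = Quotient.mk σ none)).symm
    rw [Nat.card_sum, h1] at hcongr
    rw [hcongr]
    show 1 + Nat.card N = Nat.card N + 1
    omega
  have eEquiv : (Quotient OS × ZMod m) ≃ N := by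
    refine Equiv.ofBijective (fun oc => actN oc.2 (repN oc.1)) ⟨?_, ?_⟩
    · rintro ⟨o, c⟩ ⟨o', c'⟩ h
      simp only at h
      have ho : o = o' := by
        have h1 : Quotient.mk OS (repN o) = Quotient.mk OS (repN o') := by
          refine Quotient.sound ⟨c + -c', ?_⟩
          rw [← actN_actN, h, actN_actN, add_neg_cancel, actN_zero]
        rwa [rep_mk, rep_mk] at h1
      subst ho
      have h2 : actN (c + -c') (repN o) = repN o := by
        rw [← actN_actN, h, actN_actN, add_neg_cancel, actN_zero]
      have h3 : act (c + -c') (repN o).1 = (repN o).1 := congrArg Subtype.val h2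
      have h4 : c + -c' = 0 := act_free _ _ (repN o).2 h3
      have h5 : c = c' := by
        have := add_neg_eq_zero.mp h4
        exact this
      rw [h5]
    · intro q
      obtain ⟨c, hc⟩ : ∃ c : ZMod m, actN c (repN (Quotient.mk OS q)) = q :=
        Quotient.exact (rep_mk (Quotient.mk OS q))
      exact ⟨(Quotient.mk OS q, c), hc⟩
  have e2 : Nat.card N = Nat.card (Quotient OS) * m := by
    rw [← Nat.card_congr eEquiv, Nat.card_prod, Nat.card_zmod]
  rw [e1, e2, hrank]
  ring

end S16


open S16

/-- for `m ≥ 2` and `n ≥ 1`, the intersection lattice `L̄(m,n)` ordered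
by reverse inclusion is order-isomorphic to the poset of colored set partitions of type
`(m̄,n)` ordered by refinement; consequently for every `0 ≤ k ≤ n`, the number of
subspaces in `L̄(m,n)` of dimension `k` equals `S̄(m,n,k)`. -/
theorem stmt16 (m n : ℕ) (hm : 2 ≤ m) (hn : 1 ≤ n) :
    (∃ f : {W : Submodule ℂ (Fin n → ℂ) // W ∈ BarInterLattice m n} ≃
        {σ : Setoid (ColoredSet m n) // IsBarColored σ},
      ∀ W₁ W₂, W₂.1 ≤ W₁.1 ↔ (f W₁).1 ≤ (f W₂).1) ∧
    (∀ k : ℕ, k ≤ n →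
      Nat.card {W : Submodule ℂ (Fin n → ℂ) //
          W ∈ BarInterLattice m n ∧ Module.finrank ℂ W = k}
        = SbarCount m n k) := by
  classical
  let f : {W : Submodule ℂ (Fin n → ℂ) // W ∈ BarInterLattice m n} ≃
      {σ : Setoid (ColoredSet m n) // IsBarColored σ} :=
    { toFun := fun W => ⟨SetoidOf m W.1, bar_SetoidOf hm W.2⟩
      invFun := fun σ => ⟨Vsub σ.1, Vsub_mem_lattice hm σ.2⟩
      left_inv := fun W => Subtype.ext (Vsub_SetoidOf hm W.2)
      right_inv := fun σ => Subtype.ext (SetoidOf_Vsub hm σ.2.1) }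
  constructor
  · refine ⟨f, ?_⟩
    intro W₁ W₂
    constructor
    · intro hle
      show SetoidOf m W₁.1 ≤ SetoidOf m W₂.1
      rw [Setoid.le_def]
      intro x y hxy v hv
      exact hxy v (hle hv)
    · intro hle
      have hle' : SetoidOf m W₁.1 ≤ SetoidOf m W₂.1 := hle
      have h1 : Vsub (SetoidOf m W₂.1) ≤ Vsub (SetoidOf m W₁.1) := by
        intro v hv
        refine mem_Vsub.mpr ?_
        intro x y hxy
        exact mem_Vsub.mp hv x y (Setoid.le_def.mp hle' hxy)
      rwa [Vsub_SetoidOf hm W₁.2, Vsub_SetoidOf hm W₂.2] at h1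
  · intro k _
    have hchar : ∀ (W : Submodule ℂ (Fin n → ℂ)), W ∈ BarInterLattice m n →
        Nat.card (Quotient (SetoidOf m W)) = m * Module.finrank ℂ W + 1 := by
      intro W hW
      have h1 := card_blocks hm (bar_SetoidOf hm hW)
      rwa [Vsub_SetoidOf hm hW] at h1
    show _ = SbarCount m n k
    unfold SbarCount
    refine Nat.card_congr
      { toFun := fun W => ⟨SetoidOf m W.1, bar_SetoidOf hm W.2.1, by
          rw [hchar W.1 W.2.1, W.2.2]; ring⟩
        invFun := fun σ => ⟨Vsub σ.1, Vsub_mem_lattice hm σ.2.1, by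
          have h1 := card_blocks hm σ.2.1
          have h2 := σ.2.2
          rw [h1] at h2
          have h3 : m * Module.finrank ℂ (Vsub σ.1) = m * k :=
            (Nat.add_right_cancel h2).trans (mul_comm k m)
          exact Nat.eq_of_mul_eq_mul_left (by omega) h3⟩
        left_inv := fun W => Subtype.ext (Vsub_SetoidOf hm W.2.1)
        right_inv := fun σ => Subtype.ext (SetoidOf_Vsub hm σ.2.1.1) }
end
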